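/- arXiv:0707.3271 — 7 statements merged into one kernel-verified Lean document; each statement's English description precedes it below -/
import Mathlib

section
/- Let S and T be characteristic sets. Define the arithmetic-mean closure S⁻ := {ξ ∈ c₀* : ξ ≺ η for some η ∈ S} and the sum S + T := {ξ ∈ c₀* : there exist σ ∈ S and τ ∈ T with ξ_n ≤ σ_n + τ_n for all n}. Then (S + T)⁻ = S⁻ + T⁻. In particular, if S = S⁻ and T = T⁻ (S and T are am-closed), then S + T is am-closed. -/
/-!
Sequences are indexed by `ℕ` starting at 0, so that entry `n` corresponds to the
`(n+1)`-st term of a sequence indexed by `{1,2,...}`.  With this convention the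
2-fold ampliation `(D₂ξ)_m = ξ_{⌈m/2⌉}` becomes `n ↦ ξ (n / 2)` (natural division).
-/

/-- `ξ ∈ c₀*`: nonnegative, nonincreasing, converging to 0. -/
def IsC0Star (ξ : ℕ → ℝ) : Prop :=
  (∀ n, 0 ≤ ξ n) ∧ (∀ n, ξ (n + 1) ≤ ξ n) ∧ Filter.Tendsto ξ Filter.atTop (nhds 0)

/-- `ξ ≺ η`: majorization, `∑_{j=1}^n ξ_j ≤ ∑_{j=1}^n η_j` for every `n`. -/
def Maj (ξ η : ℕ → ℝ) : Prop :=
  ∀ n : ℕ, ∑ j ∈ Finset.range n, ξ j ≤ ∑ j ∈ Finset.range n, η j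

/-- A characteristic set: a subset of `c₀*` that is hereditary, additive,
and invariant under the 2-fold ampliation. -/
def IsCharSet (S : Set (ℕ → ℝ)) : Prop :=
  (∀ ξ ∈ S, IsC0Star ξ) ∧
  (∀ η ∈ S, ∀ ξ : ℕ → ℝ, IsC0Star ξ → (∀ n, ξ n ≤ η n) → ξ ∈ S) ∧
  (∀ ξ ∈ S, ∀ η ∈ S, (fun n => ξ n + η n) ∈ S) ∧
  (∀ ξ ∈ S, (fun n => ξ (n / 2)) ∈ S)

/-- The arithmetic-mean closure `S⁻ = {ξ ∈ c₀* : ξ ≺ η for some η ∈ S}`. -/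
def amClosure (S : Set (ℕ → ℝ)) : Set (ℕ → ℝ) :=
  {ξ | IsC0Star ξ ∧ ∃ η ∈ S, Maj ξ η}

/-- The sum `S + T = {ξ ∈ c₀* : ξ ≤ σ + τ pointwise for some σ ∈ S, τ ∈ T}`. -/
def setSum (S T : Set (ℕ → ℝ)) : Set (ℕ → ℝ) :=
  {ξ | IsC0Star ξ ∧ ∃ σ ∈ S, ∃ τ ∈ T, ∀ n, ξ n ≤ σ n + τ n}

open Finset Filter

/-- Increments of a nonnegative discrete-concave function are nonnegative. -/
lemma aux_incr_nonneg (W : ℕ → ℝ) (h0 : ∀ n, 0 ≤ W n)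
    (hc : ∀ n, W n + W (n + 2) ≤ 2 * W (n + 1)) : ∀ n, 0 ≤ W (n + 1) - W n := by
  intro n
  by_contra hneg
  push_neg at hneg
  have hinc : Antitone (fun m => W (m + 1) - W m) :=
    antitone_nat_of_succ_le (fun m => by
      show W (m + 1 + 1) - W (m + 1) ≤ W (m + 1) - W m
      have := hc m; linarith)
  have hstep : ∀ k : ℕ, W (n + 1 + k) ≤ W (n + 1) + k * (W (n + 1) - W n) := by
    intro k
    induction k with
    | zero => simp
    | succ k ih =>
      have h1 : W (n + 1 + k + 1) - W (n + 1 + k) ≤ W (n + 1) - W n :=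
        hinc (by omega : n ≤ n + 1 + k)
      have h2 : W (n + 1 + (k + 1)) = W (n + 1 + k + 1) := by ring_nf
      rw [h2]
      push_cast
      linarith
  obtain ⟨K, hK⟩ := exists_nat_gt (W (n + 1) / (W n - W (n + 1)))
  have hd : 0 < W n - W (n + 1) := by linarith
  have h2 : W (n + 1) < K * (W n - W (n + 1)) := by
    rwa [div_lt_iff₀ hd] at hK
  have := hstep K
  have := h0 (n + 1 + K)
  nlinarith

/-- Supporting line for partial sums of a nonincreasing sequence. -/
lemma aux_line (σ : ℕ → ℝ) (hm : Antitone σ) (n k : ℕ) :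
    ∑ j ∈ range k, σ j ≤ ∑ j ∈ range n, σ j + ((k : ℝ) - n) * σ n := by
  rcases le_total n k with h | h
  · have h1 : ∑ j ∈ Ico n k, σ j = ∑ j ∈ range k, σ j - ∑ j ∈ range n, σ j :=
      sum_Ico_eq_sub _ h
    have h2 : ∑ j ∈ Ico n k, σ j ≤ (Ico n k).card • σ n :=
      sum_le_card_nsmul _ _ _ (fun j hj => hm (mem_Ico.1 hj).1)
    rw [Nat.card_Ico, nsmul_eq_mul] at h2
    have h3 : ((k - n : ℕ) : ℝ) = (k : ℝ) - n := by
      push_cast [Nat.cast_sub h]; ring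
    rw [h3] at h2
    linarith
  · have h1 : ∑ j ∈ Ico k n, σ j = ∑ j ∈ range n, σ j - ∑ j ∈ range k, σ j :=
      sum_Ico_eq_sub _ h
    have h2 : (Ico k n).card • σ n ≤ ∑ j ∈ Ico k n, σ j :=
      card_nsmul_le_sum _ _ _ (fun j hj => hm (le_of_lt (mem_Ico.1 hj).2))
    rw [Nat.card_Ico, nsmul_eq_mul] at h2
    have h3 : ((n - k : ℕ) : ℝ) = (n : ℝ) - k := by
      push_cast [Nat.cast_sub h]; ring
    rw [h3] at h2
    nlinarith

/-- A nonneg nonincreasing sequence whose partial sums are dominated by those of a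
nonincreasing null sequence tends to 0. -/
lemma aux_tendsto (α σ : ℕ → ℝ) (hα0 : ∀ n, 0 ≤ α n) (hαm : Antitone α)
    (hσ0 : ∀ n, 0 ≤ σ n) (hσm : Antitone σ) (hσt : Tendsto σ atTop (nhds 0))
    (hsum : ∀ n, ∑ j ∈ range n, α j ≤ ∑ j ∈ range n, σ j) :
    Tendsto α atTop (nhds 0) := by
  rw [Metric.tendsto_atTop]
  intro ε hε
  obtain ⟨N₀, hN₀⟩ := (Metric.tendsto_atTop.1 hσt) (ε / 2) (by linarith)
  have hσN : σ N₀ < ε / 2 := by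
    have := hN₀ N₀ le_rfl
    rw [Real.dist_eq, abs_of_nonneg (by linarith [hσ0 N₀] : (0:ℝ) ≤ σ N₀ - 0)] at this
    linarith
  set C := ∑ j ∈ range N₀, σ j with hC
  obtain ⟨K, hK⟩ := exists_nat_gt (C / (ε / 2))
  refine ⟨N₀ + K + 1, fun n hn => ?_⟩
  have hcard : N₀ ≤ n + 1 := by omega
  have h1 : (Ico N₀ (n+1)).card • α n ≤ ∑ j ∈ Ico N₀ (n+1), α j :=
    card_nsmul_le_sum _ _ _ (fun j hj => hαm (Nat.lt_succ_iff.1 (mem_Ico.1 hj).2))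
  have h2 : ∑ j ∈ Ico N₀ (n+1), α j = ∑ j ∈ range (n+1), α j - ∑ j ∈ range N₀, α j :=
    sum_Ico_eq_sub _ hcard
  have h3 : (0:ℝ) ≤ ∑ j ∈ range N₀, α j := sum_nonneg fun j _ => hα0 j
  have h5 : ∑ j ∈ Ico N₀ (n+1), σ j ≤ (Ico N₀ (n+1)).card • σ N₀ :=
    sum_le_card_nsmul _ _ _ (fun j hj => hσm (mem_Ico.1 hj).1)
  have h6 : ∑ j ∈ Ico N₀ (n+1), σ j = ∑ j ∈ range (n+1), σ j - C :=
    sum_Ico_eq_sub _ hcard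
  rw [Nat.card_Ico, nsmul_eq_mul] at h1 h5
  have hcards : ((n + 1 - N₀ : ℕ) : ℝ) = (n:ℝ) + 1 - N₀ := by
    push_cast [Nat.cast_sub hcard]; ring
  rw [hcards] at h1 h5
  have hcpos : (K:ℝ) + 1 ≤ (n:ℝ) + 1 - N₀ := by
    have : (N₀ : ℝ) + K + 1 ≤ n := by exact_mod_cast hn
    linarith
  have hKpos : (0:ℝ) < (K:ℝ) + 1 := by positivity
  have hCK : C < (ε/2) * K := by
    rw [div_lt_iff₀ (by linarith : (0:ℝ) < ε/2)] at hK
    linarith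
  have hαn : ((n:ℝ) + 1 - N₀) * α n ≤ C + ((n:ℝ) + 1 - N₀) * σ N₀ := by
    have := hsum (n+1)
    linarith
  have hεb : ((n:ℝ) + 1 - N₀) * α n < ((n:ℝ) + 1 - N₀) * ε := by
    have hσbound : ((n:ℝ) + 1 - N₀) * σ N₀ ≤ ((n:ℝ) + 1 - N₀) * (ε/2) := by
      apply mul_le_mul_of_nonneg_left (le_of_lt hσN) (by linarith)
    have hCsmall : C < ((n:ℝ) + 1 - N₀) * (ε/2) := by
      have : (ε/2) * K ≤ ((n:ℝ) + 1 - N₀) * (ε/2) := by nlinarith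
      linarith
    nlinarith
  have hαlt : α n < ε := by
    have hpos : (0:ℝ) < (n:ℝ) + 1 - N₀ := by linarith
    exact lt_of_mul_lt_mul_left (by linarith) (le_of_lt hpos)
  rw [Real.dist_eq, abs_of_nonneg (by linarith [hα0 n] : (0:ℝ) ≤ α n - 0)]
  linarith

lemma decomp (ξ σ τ : ℕ → ℝ) (hξ : IsC0Star ξ) (hσ : IsC0Star σ) (hτ : IsC0Star τ)
    (hmaj : Maj ξ fun n => σ n + τ n) :
    ∃ α β : ℕ → ℝ, IsC0Star α ∧ IsC0Star β ∧ Maj α σ ∧ Maj β τ ∧ ∀ n, ξ n = α n + β n := by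
  obtain ⟨hξ0, hξm, hξt⟩ := hξ
  obtain ⟨hσ0, hσm, hσt⟩ := hσ
  obtain ⟨hτ0, hτm, hτt⟩ := hτ
  have hξa : Antitone ξ := antitone_nat_of_succ_le hξm
  have hσa : Antitone σ := antitone_nat_of_succ_le hσm
  have hτa : Antitone τ := antitone_nat_of_succ_le hτm
  set F : ℕ → ℝ := fun n => ∑ j ∈ range n, ξ j with hFdef
  set G : ℕ → ℝ := fun n => ∑ j ∈ range n, σ j with hGdef
  set H : ℕ → ℝ := fun n => ∑ j ∈ range n, τ j with hHdef
  have hFsucc : ∀ n, F (n+1) = F n + ξ n := fun n => sum_range_succ _ _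
  have hGsucc : ∀ n, G (n+1) = G n + σ n := fun n => sum_range_succ _ _
  have hHsucc : ∀ n, H (n+1) = H n + τ n := fun n => sum_range_succ _ _
  have hF0 : ∀ n, 0 ≤ F n := fun n => sum_nonneg fun j _ => hξ0 j
  have hG0 : ∀ n, 0 ≤ G n := fun n => sum_nonneg fun j _ => hσ0 j
  have hH0 : ∀ n, 0 ≤ H n := fun n => sum_nonneg fun j _ => hτ0 j
  have hFGH : ∀ n, F n ≤ G n + H n := by
    intro n
    have := hmaj n
    rwa [sum_add_distrib] at this
  set M : ℕ → ℝ := fun n => max (F n - H n) 0 with hMdef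
  have hM0 : ∀ n, 0 ≤ M n := fun n => le_max_right _ _
  have hMFH : ∀ n, F n - H n ≤ M n := fun n => le_max_left _ _
  have hMG : ∀ n, M n ≤ G n := fun n => max_le (by linarith [hFGH n]) (hG0 n)
  have hMF : ∀ n, M n ≤ F n := fun n => max_le (by linarith [hH0 n]) (hF0 n)
  set A : Set (ℝ × ℝ) := {p | ∀ k : ℕ, M k ≤ p.1 + p.2 * k} with hAdef
  set V : ℕ → Set ℝ := fun n => (fun p : ℝ × ℝ => p.1 + p.2 * n) '' A with hVdef
  have hA0 : ((0 : ℝ), ξ 0) ∈ A := by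
    intro k
    have h1 : F k ≤ (k : ℝ) * ξ 0 := by
      have := sum_le_card_nsmul (range k) ξ (ξ 0) (fun j _ => hξa (Nat.zero_le j))
      rwa [card_range, nsmul_eq_mul] at this
    refine max_le (by simp; nlinarith [hH0 k]) (by simp; exact mul_nonneg (hξ0 0) (Nat.cast_nonneg k))
  have hVne : ∀ n, (V n).Nonempty := fun n => ⟨_, ⟨_, hA0, rfl⟩⟩
  have hVbdd : ∀ n, BddBelow (V n) := by
    rintro n
    refine ⟨M n, ?_⟩
    rintro y ⟨p, hp, rfl⟩
    exact hp n
  set U : ℕ → ℝ := fun n => sInf (V n) with hUdef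
  have hUle : ∀ p ∈ A, ∀ n : ℕ, U n ≤ p.1 + p.2 * n := fun p hp n =>
    csInf_le (hVbdd n) ⟨p, hp, rfl⟩
  have hUge : ∀ n, M n ≤ U n := fun n => le_csInf (hVne n) (by rintro y ⟨p, hp, rfl⟩; exact hp n)
  have hUleG : ∀ n, U n ≤ G n := by
    intro n
    have hp : ((G n - σ n * n, σ n) : ℝ × ℝ) ∈ A := by
      intro k
      have h1 := hMG k
      have h2 := aux_line σ hσa n k
      have h3 : ((k : ℝ) - n) * σ n = σ n * k - σ n * n := by ring
      simp only
      linarith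
    have := hUle _ hp n
    simp only at this
    linarith
  have hUleF : ∀ n, U n ≤ F n := by
    intro n
    have hp : ((F n - ξ n * n, ξ n) : ℝ × ℝ) ∈ A := by
      intro k
      have h1 := hMF k
      have h2 := aux_line ξ hξa n k
      have h3 : ((k : ℝ) - n) * ξ n = ξ n * k - ξ n * n := by ring
      simp only
      linarith
    have := hUle _ hp n
    simp only at this
    linarith
  have hU0 : U 0 = 0 := by
    have h1 : U 0 ≤ 0 := by
      have := hUleF 0
      simpa [hFdef] using this
    have h2 : (0:ℝ) ≤ U 0 := le_trans (hM0 0) (hUge 0)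
    linarith
  have hconc : ∀ n, U n + U (n + 2) ≤ 2 * U (n + 1) := by
    intro n
    have hlb : ∀ y ∈ V (n+1), (U n + U (n + 2)) / 2 ≤ y := by
      rintro y ⟨p, hp, rfl⟩
      have h1 := hUle p hp n
      have h2 := hUle p hp (n+2)
      push_cast at h1 h2 ⊢
      linarith
    have := le_csInf (hVne (n+1)) hlb
    linarith
  have hkey : ∀ n, 2 * U (n + 1) ≤ U n + U (n + 2) + (ξ n - ξ (n + 1)) := by
    intro n
    set D := ξ n - ξ (n + 1) with hDdef
    have hD : 0 ≤ D := by have := hξm n; simp [hDdef]; linarith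
    have main : ∀ p ∈ A, ∀ q ∈ A,
        2 * U (n + 1) ≤ (p.1 + p.2 * n) + (q.1 + q.2 * ((n:ℝ) + 2)) + D := by
      intro p hp q hq
      set L1 := p.1 + p.2 * (n:ℝ) with hL1
      set L2 := q.1 + q.2 * ((n:ℝ) + 2) with hL2
      by_cases hc1 : p.1 + p.2 * ((n:ℝ) + 2) ≤ L2 + D
      · have hU1 := hUle p hp (n+1)
        push_cast at hU1
        have hr : p.1 + p.2 * ((n:ℝ)+1) + (p.1 + p.2 * ((n:ℝ)+1))
            = (p.1 + p.2 * (n:ℝ)) + (p.1 + p.2 * ((n:ℝ)+2)) := by ring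
        linarith
      by_cases hc2 : q.1 + q.2 * (n:ℝ) ≤ L1 + D
      · have hU2 := hUle q hq (n+1)
        push_cast at hU2
        have hr : q.1 + q.2 * ((n:ℝ)+1) + (q.1 + q.2 * ((n:ℝ)+1))
            = (q.1 + q.2 * (n:ℝ)) + (q.1 + q.2 * ((n:ℝ)+2)) := by ring
        linarith
      push_neg at hc1 hc2
      set s := (L2 - L1) / 2 with hs
      set v := max (M (n+1)) ((L1 + L2) / 2) with hv
      have hvge : (L1 + L2) / 2 ≤ v := le_max_right _ _
      have hvge' : M (n+1) ≤ v := le_max_left _ _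
      have hq2s : q.2 ≤ s := by
        have hr : q.1 + q.2 * (n:ℝ) = L2 - 2 * q.2 := by rw [hL2]; ring
        rw [hr] at hc2
        rw [hs]; linarith
      have hsp2 : s ≤ p.2 := by
        have hr : p.1 + p.2 * ((n:ℝ)+2) = L1 + 2 * p.2 := by rw [hL1]; ring
        rw [hr] at hc1
        rw [hs]; linarith
      have hpstar : ((v - s * ((n:ℝ) + 1), s) : ℝ × ℝ) ∈ A := by
        intro k
        show M k ≤ v - s * ((n:ℝ)+1) + s * k
        rcases lt_trichotomy k (n+1) with hk | hk | hk
        · have hkn : (k:ℝ) ≤ (n:ℝ) := by exact_mod_cast Nat.lt_succ_iff.1 hk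
          have h1 := hp k
          have hprod : 0 ≤ (p.2 - s) * ((n:ℝ) - k) :=
            mul_nonneg (by linarith) (by linarith)
          nlinarith [h1, hvge, hprod]
        · subst hk
          push_cast
          linarith
        · have hkn : (n:ℝ) + 2 ≤ (k:ℝ) := by exact_mod_cast hk
          have h1 := hq k
          have hprod : 0 ≤ (s - q.2) * ((k:ℝ) - ((n:ℝ) + 2)) :=
            mul_nonneg (by linarith) (by linarith)
          nlinarith [h1, hvge, hprod]
      have hUv : U (n+1) ≤ v := by
        have := hUle _ hpstar (n+1)
        simp only at this
        push_cast at this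
        linarith
      have hL1M : M n ≤ L1 := hp n
      have hL2M : M (n+2) ≤ L2 := by
        have := hq (n+2); push_cast at this; rw [hL2]; linarith
      have hL10 : (0:ℝ) ≤ L1 := le_trans (hM0 n) hL1M
      have hL20 : (0:ℝ) ≤ L2 := le_trans (hM0 (n+2)) hL2M
      have hmb : 2 * M (n+1) ≤ L1 + L2 + D := by
        rcases le_or_gt (F (n+1) - H (n+1)) 0 with hle | hlt
        · have hM1 : M (n+1) = 0 := max_eq_right hle
          rw [hM1]; linarith
        · have hM1 : M (n+1) = F (n+1) - H (n+1) := max_eq_left (le_of_lt hlt)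
          have e1 := hFsucc n; have e2 := hFsucc (n+1)
          have e3 := hHsucc n; have e4 := hHsucc (n+1)
          have h5 : F n - H n ≤ L1 := le_trans (hMFH n) hL1M
          have h6 : F (n+2) - H (n+2) ≤ L2 := le_trans (hMFH (n+2)) hL2M
          have h7 := hτm n
          rw [hM1]
          rw [hDdef]
          linarith
      have h2v : 2 * v ≤ L1 + L2 + D := by
        rcases max_cases (M (n+1)) ((L1+L2)/2) with ⟨he, _⟩ | ⟨he, _⟩ <;>
          rw [hv, he] <;> linarith
      linarith
    have h1 : ∀ b ∈ V (n + 2), 2 * U (n + 1) - D - U n ≤ b := by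
      rintro b ⟨q, hq, rfl⟩
      have h2 : ∀ a ∈ V n, 2 * U (n + 1) - D - (q.1 + q.2 * ((n:ℝ) + 2)) ≤ a := by
        rintro a ⟨p, hp, rfl⟩
        have := main p hp q hq
        show 2 * U (n + 1) - D - (q.1 + q.2 * ((n:ℝ) + 2)) ≤ p.1 + p.2 * (n:ℝ)
        linarith
      have h3 := le_csInf (hVne n) h2
      push_cast
      linarith
    have h4 := le_csInf (hVne (n+2)) h1
    linarith
  have hαnn : ∀ k, 0 ≤ U (k+1) - U k :=
    aux_incr_nonneg U (fun k => le_trans (hM0 k) (hUge k)) hconc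
  have hαm : ∀ k, U (k+1+1) - U (k+1) ≤ U (k+1) - U k := by
    intro k; have := hconc k; linarith
  have hβnn : ∀ k, 0 ≤ ξ k - (U (k+1) - U k) := by
    have h := aux_incr_nonneg (fun k => F k - U k)
      (fun k => sub_nonneg.2 (hUleF k))
      (fun k => by
        show (F k - U k) + (F (k+2) - U (k+2)) ≤ 2 * (F (k+1) - U (k+1))
        have := hkey k
        have e1 := hFsucc k; have e2 := hFsucc (k+1)
        linarith)
    intro k
    have := h k
    have e1 := hFsucc k
    linarith
  have hβm : ∀ k, ξ (k+1) - (U (k+1+1) - U (k+1)) ≤ ξ k - (U (k+1) - U k) := by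
    intro k; have := hkey k; linarith
  have hsumα : ∀ m, ∑ j ∈ range m, (U (j+1) - U j) = U m := by
    intro m
    rw [Finset.sum_range_sub U m, hU0, sub_zero]
  have hsumβ : ∀ m, ∑ j ∈ range m, (ξ j - (U (j+1) - U j)) = F m - U m := by
    intro m
    rw [sum_sub_distrib, hsumα]
  refine ⟨fun k => U (k+1) - U k, fun k => ξ k - (U (k+1) - U k), ?_, ?_, ?_, ?_, ?_⟩
  · refine ⟨hαnn, hαm, ?_⟩
    refine aux_tendsto _ σ hαnn (antitone_nat_of_succ_le hαm) hσ0 hσa hσt ?_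
    intro m
    rw [hsumα]
    exact hUleG m
  · refine ⟨hβnn, hβm, ?_⟩
    refine aux_tendsto _ τ hβnn (antitone_nat_of_succ_le hβm) hτ0 hτa hτt ?_
    intro m
    rw [hsumβ]
    have h1 := hUge m
    have h2 := hMFH m
    linarith
  · intro m
    rw [hsumα]
    exact hUleG m
  · intro m
    rw [hsumβ]
    have h1 := hUge m
    have h2 := hMFH m
    linarith
  · intro m; ring

theorem stmt_0 (S T : Set (ℕ → ℝ)) (hS : IsCharSet S) (hT : IsCharSet T) :
    amClosure (setSum S T) = setSum (amClosure S) (amClosure T) ∧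
    (S = amClosure S → T = amClosure T → setSum S T = amClosure (setSum S T)) := by
  have key : amClosure (setSum S T) = setSum (amClosure S) (amClosure T) := by
    ext ξ
    constructor
    · rintro ⟨hξ, ρ, ⟨hρc0, σ, hσS, τ, hτT, hle⟩, hmajρ⟩
      have hσc0 : IsC0Star σ := hS.1 σ hσS
      have hτc0 : IsC0Star τ := hT.1 τ hτT
      have hmaj : Maj ξ (fun n => σ n + τ n) := by
        intro n
        exact le_trans (hmajρ n) (Finset.sum_le_sum fun j _ => hle j)
      obtain ⟨α, β, hαc0, hβc0, hαmaj, hβmaj, heq⟩ := decomp ξ σ τ hξ hσc0 hτc0 hmaj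
      exact ⟨hξ, α, ⟨hαc0, σ, hσS, hαmaj⟩, β, ⟨hβc0, τ, hτT, hβmaj⟩,
        fun n => (heq n).le⟩
    · rintro ⟨hξ, α, ⟨hαc0, σ, hσS, hασ⟩, β, ⟨hβc0, τ, hτT, hβτ⟩, hle⟩
      have hσc0 : IsC0Star σ := hS.1 σ hσS
      have hτc0 : IsC0Star τ := hT.1 τ hτT
      have hστc0 : IsC0Star (fun n => σ n + τ n) := by
        refine ⟨fun n => add_nonneg (hσc0.1 n) (hτc0.1 n),
          fun n => add_le_add (hσc0.2.1 n) (hτc0.2.1 n), ?_⟩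
        simpa using hσc0.2.2.add hτc0.2.2
      refine ⟨hξ, fun n => σ n + τ n, ⟨hστc0, σ, hσS, τ, hτT, fun n => le_refl _⟩, ?_⟩
      intro n
      calc ∑ j ∈ Finset.range n, ξ j
          ≤ ∑ j ∈ Finset.range n, (α j + β j) :=
            Finset.sum_le_sum fun j _ => hle j
        _ = ∑ j ∈ Finset.range n, α j + ∑ j ∈ Finset.range n, β j :=
            Finset.sum_add_distrib
        _ ≤ ∑ j ∈ Finset.range n, σ j + ∑ j ∈ Finset.range n, τ j :=
            add_le_add (hασ n) (hβτ n)
        _ = ∑ j ∈ Finset.range n, (σ j + τ j) := Finset.sum_add_distrib.symm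
  refine ⟨key, fun h1 h2 => ?_⟩
  rw [key, ← h1, ← h2]
end

section
/- Let S be a countably generated characteristic set, i.e., assume there exists a sequence of sequences ξ^(k) ∈ c₀* (k ∈ ℕ) such that S = {η ∈ c₀* : there exist k, m ∈ ℕ and C > 0 with η_n ≤ C·ξ^(k)_{⌈n/m⌉} for all n}. Then S is am-closed (i.e., ξ ∈ c₀*, η ∈ S and ξ ≺ η imply ξ ∈ S) if and only if S is am-stable (i.e., η ∈ S implies η_a ∈ S). -/
/-- The arithmetic mean `(ξ_a)_n = (1/n)∑_{j=1}^n ξ_j` (0-based indexing). -/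
noncomputable def am (ξ : ℕ → ℝ) (n : ℕ) : ℝ :=
  (∑ j ∈ Finset.range (n + 1), ξ j) / (n + 1)

open Finset Filter

lemma IsC0Star.anti' {ξ : ℕ → ℝ} (h : IsC0Star ξ) : Antitone ξ :=
  antitone_nat_of_succ_le h.2.1

lemma mul_le_sum' {ξ : ℕ → ℝ} (h : IsC0Star ξ) (n : ℕ) :
    ((n : ℝ) + 1) * ξ n ≤ ∑ j ∈ range (n + 1), ξ j := by
  have := Finset.card_nsmul_le_sum (range (n+1)) ξ (ξ n)
    (fun i hi => h.anti' (Nat.le_of_lt_succ (mem_range.mp hi)))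
  rw [card_range, nsmul_eq_mul] at this
  push_cast at this
  linarith

lemma le_am' {ξ : ℕ → ℝ} (h : IsC0Star ξ) (n : ℕ) : ξ n ≤ am ξ n := by
  rw [am, le_div_iff₀ (by positivity)]
  have := mul_le_sum' h n; linarith

lemma am_nonneg' {ξ : ℕ → ℝ} (h : IsC0Star ξ) (n : ℕ) : 0 ≤ am ξ n :=
  div_nonneg (Finset.sum_nonneg fun j _ => h.1 j) (by positivity)

lemma am_succ_le' {ξ : ℕ → ℝ} (h : IsC0Star ξ) (n : ℕ) : am ξ (n+1) ≤ am ξ n := by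
  rw [am, am, div_le_div_iff₀ (by positivity) (by positivity),
    Finset.sum_range_succ _ (n+1)]
  have h1 := mul_le_sum' h n
  have h2 : ξ (n+1) ≤ ξ n := h.2.1 n
  have h3 : (0:ℝ) ≤ (n:ℝ) + 1 := by positivity
  push_cast
  nlinarith [h.1 (n+1)]

lemma am_tendsto' {ξ : ℕ → ℝ} (h : IsC0Star ξ) :
    Filter.Tendsto (am ξ) Filter.atTop (nhds 0) := by
  have h1 := h.2.2.cesaro
  have h2 := h1.comp (tendsto_add_atTop_nat 1)
  have : (fun n : ℕ => ((n:ℝ)+1)⁻¹ * ∑ i ∈ range (n+1), ξ i) = am ξ := by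
    funext n
    rw [am, inv_mul_eq_div]
  rw [← this]
  convert h2 using 2 with n
  simp only [Function.comp_apply]
  push_cast
  ring


lemma isC0Star_am' {ξ : ℕ → ℝ} (h : IsC0Star ξ) : IsC0Star (am ξ) :=
  ⟨am_nonneg' h, am_succ_le' h, am_tendsto' h⟩

lemma am_le_am' {ξ η : ℕ → ℝ} (hmaj : Maj ξ η) (n : ℕ) : am ξ n ≤ am η n := by
  rw [am, am]
  have := hmaj (n+1)
  gcongr

noncomputable def cseq (i : ℕ) : ℝ := (1/2 : ℝ)^(i+1)

lemma cseq_pos (i : ℕ) : 0 < cseq i := by rw [cseq]; positivity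

lemma cseq_anti : Antitone cseq := fun i i' h =>
  pow_le_pow_of_le_one (by norm_num) (by norm_num) (by omega)

lemma cseq_sum_le (t : ℕ) : ∑ i ∈ range t, cseq i ≤ 1 := by
  have : ∑ i ∈ range t, cseq i = 1 - (1/2:ℝ)^t := by
    induction t with
    | zero => simp
    | succ t ih =>
      rw [Finset.sum_range_succ, ih, cseq, pow_succ]
      ring
  rw [this]
  have : (0:ℝ) ≤ (1/2:ℝ)^t := by positivity
  linarith

def Kdec (i : ℕ) : ℕ := (Nat.unpair (Nat.unpair i).1).1
def Mdec (i : ℕ) : ℕ := (Nat.unpair (Nat.unpair i).1).2 + 1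

lemma Kdec_pair (k m t : ℕ) : Kdec (Nat.pair (Nat.pair k m) t) = k := by
  simp [Kdec]
lemma Mdec_pair (k m t : ℕ) : Mdec (Nat.pair (Nat.pair k m) t) = m + 1 := by
  simp [Mdec]
lemma Mdec_pos (i : ℕ) : 0 < Mdec i := Nat.succ_pos _

set_option maxHeartbeats 2000000 in
theorem stmt_1 (S : Set (ℕ → ℝ)) (gen : ℕ → ℕ → ℝ) (hgen : ∀ k, IsC0Star (gen k))
    (hS : S = {η | IsC0Star η ∧
      ∃ k m : ℕ, 0 < m ∧ ∃ C : ℝ, 0 < C ∧ ∀ n, η n ≤ C * gen k (n / m)}) :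
    (∀ ξ η : ℕ → ℝ, IsC0Star ξ → η ∈ S → Maj ξ η → ξ ∈ S) ↔ (∀ η ∈ S, am η ∈ S) := by
  constructor
  · -- am-closed → am-stable
    intro hclosed η hηS
    have hη := hηS
    rw [hS] at hη
    obtain ⟨hηc, k0, m0, hm0, C0, hC0, hbd0⟩ := hη
    rw [hS]
    by_cases hη0 : η 0 = 0
    · refine ⟨isC0Star_am' hηc, k0, m0, hm0, C0, hC0, fun n => ?_⟩
      have hz : ∀ j, η j = 0 := fun j => le_antisymm (hη0 ▸ hηc.anti' (Nat.zero_le j)) (hηc.1 j)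
      have hz2 : am η n = 0 := by
        rw [am, Finset.sum_eq_zero fun j _ => hz j, zero_div]
      rw [hz2]
      exact mul_nonneg hC0.le ((hgen k0).1 _)
    · by_contra hnot
      simp only [Set.mem_setOf_eq] at hnot
      push_neg at hnot
      have hAc : IsC0Star (am η) := isC0Star_am' hηc
      have H := hnot hAc
      have hηpos : 0 < η 0 := lt_of_le_of_ne (hηc.1 0) (Ne.symm hη0)
      have hAanti : Antitone (am η) := hAc.anti'
      have hApos : ∀ n, 0 < am η n := by
        intro n
        rw [am]
        apply div_pos _ (by positivity)
        have h1 : η 0 ≤ ∑ j ∈ range (n+1), η j :=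
          Finset.single_le_sum (fun j _ => hηc.1 j) (mem_range.mpr n.succ_pos)
        linarith
      -- key lemma: arbitrarily late witnesses
      have key : ∀ i N : ℕ, ∃ n, N < n ∧
          ((i : ℝ) + 1) * 2 ^ (i + 1) * gen (Kdec i) (n / Mdec i) < am η n := by
        intro i N
        have hganti : Antitone (gen (Kdec i)) := (hgen (Kdec i)).anti'
        have hgnn : ∀ n, 0 ≤ gen (Kdec i) n := (hgen (Kdec i)).1
        by_cases h0 : gen (Kdec i) ((N + 1) / Mdec i) = 0
        · refine ⟨N + 1, Nat.lt_succ_self N, ?_⟩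
          rw [h0, mul_zero]
          exact hApos (N+1)
        · have hgpos : 0 < gen (Kdec i) ((N+1)/Mdec i) := lt_of_le_of_ne (hgnn _) (Ne.symm h0)
          have hC1pos : 0 < ((i:ℝ)+1) * 2^(i+1) + am η 0 / gen (Kdec i) ((N+1)/Mdec i) := by
            have : (0:ℝ) ≤ am η 0 / gen (Kdec i) ((N+1)/Mdec i) :=
              div_nonneg (hAc.1 0) hgpos.le
            positivity
          obtain ⟨n, hn⟩ := H (Kdec i) (Mdec i) (Mdec_pos i) _ hC1pos
          refine ⟨n, ?_, ?_⟩
          · by_contra hle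
            push_neg at hle
            have h1 : gen (Kdec i) ((N+1)/Mdec i) ≤ gen (Kdec i) (n / Mdec i) :=
              hganti (Nat.div_le_div_right (by omega))
            have h2 : am η 0 ≤ (((i:ℝ)+1) * 2^(i+1) + am η 0 / gen (Kdec i) ((N+1)/Mdec i))
                * gen (Kdec i) (n / Mdec i) := by
              have e1 : am η 0 = (am η 0 / gen (Kdec i) ((N+1)/Mdec i))
                  * gen (Kdec i) ((N+1)/Mdec i) := (div_mul_cancel₀ _ h0).symm
              have e2 : (am η 0 / gen (Kdec i) ((N+1)/Mdec i)) * gen (Kdec i) ((N+1)/Mdec i)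
                  ≤ (((i:ℝ)+1) * 2^(i+1) + am η 0 / gen (Kdec i) ((N+1)/Mdec i))
                    * gen (Kdec i) ((N+1)/Mdec i) := by
                apply mul_le_mul_of_nonneg_right _ (hgnn _)
                nlinarith [pow_pos (by norm_num : (0:ℝ) < 2) (i+1)]
              have e3 := mul_le_mul_of_nonneg_left h1 hC1pos.le
              linarith [e1 ▸ e2]
            have h3 : am η n ≤ am η 0 := hAanti (Nat.zero_le n)
            linarith
          · have h4 : ((i:ℝ)+1) * 2^(i+1) * gen (Kdec i) (n / Mdec i)
                ≤ (((i:ℝ)+1) * 2^(i+1) + am η 0 / gen (Kdec i) ((N+1)/Mdec i))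
                  * gen (Kdec i) (n / Mdec i) := by
              apply mul_le_mul_of_nonneg_right _ (hgnn _)
              have : (0:ℝ) ≤ am η 0 / gen (Kdec i) ((N+1)/Mdec i) :=
                div_nonneg (hAc.1 0) hgpos.le
              linarith
            linarith
      -- build the witness positions by recursion
      choose gch hgch1 hgch2 using key
      obtain ⟨f, hf0, hfs⟩ : ∃ f : ℕ → ℕ, f 0 = gch 0 0 ∧ ∀ i, f (i+1) = gch (i+1) (f i) :=
        ⟨fun i => Nat.rec (gch 0 0) (fun i' prev => gch (i'+1) prev) i, rfl, fun i => rfl⟩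
      have hfmono : StrictMono f := strictMono_nat_of_lt_succ fun i => by
        rw [hfs]; exact hgch1 (i+1) (f i)
      have hfkey : ∀ i : ℕ, ((i:ℝ)+1) * 2^(i+1) * gen (Kdec i) (f i / Mdec i) < am η (f i) := by
        intro i
        cases i with
        | zero => rw [hf0]; exact hgch2 0 0
        | succ i' => rw [hfs]; exact hgch2 (i'+1) (f i')
      -- block index function
      have hex : ∀ j, ∃ i, j ≤ f i := fun j => ⟨j, hfmono.le_apply⟩
      obtain ⟨B, hB1, hB2⟩ : ∃ B : ℕ → ℕ, (∀ j, j ≤ f (B j)) ∧ (∀ j i, j ≤ f i → B j ≤ i) :=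
        ⟨fun j => Nat.find (hex j), fun j => Nat.find_spec (hex j),
          fun j i h => Nat.find_min' (hex j) h⟩
      have hBmono : Monotone B := fun j j' hjj' => hB2 j (B j') (hjj'.trans (hB1 j'))
      have hBf : ∀ i, B (f i) = i := by
        intro i
        refine le_antisymm (hB2 _ _ le_rfl) ?_
        by_contra h
        push_neg at h
        exact absurd (hB1 (f i)) (not_le.mpr (hfmono h))
      -- the counterexample sequence
      set ξ : ℕ → ℝ := fun j => cseq (B j) * am η (f (B j)) with hξdef
      have hξnn : ∀ j, 0 ≤ ξ j := fun j => mul_nonneg (cseq_pos _).le (hAc.1 _)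
      have hξsucc : ∀ j, ξ (j+1) ≤ ξ j := fun j =>
        mul_le_mul (cseq_anti (hBmono (Nat.le_succ j)))
          (hAanti (hfmono.monotone (hBmono (Nat.le_succ j)))) (hAc.1 _) (cseq_pos _).le
      have hBtop : Filter.Tendsto B Filter.atTop Filter.atTop := by
        apply Filter.tendsto_atTop_atTop.mpr
        intro b
        refine ⟨f b + 1, fun j hj => ?_⟩
        by_contra h
        push_neg at h
        have h1 : f (B j) < f b := hfmono h
        have h2 := hB1 j
        omega
      have hξ0 : Filter.Tendsto ξ Filter.atTop (nhds 0) := by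
        have h2 : Filter.Tendsto (fun i : ℕ => ((1:ℝ)/2)^i) Filter.atTop (nhds 0) :=
          tendsto_pow_atTop_nhds_zero_of_lt_one (by norm_num) (by norm_num)
        have h3 : Filter.Tendsto (fun j => ((1:ℝ)/2)^(B j + 1)) Filter.atTop (nhds 0) :=
          h2.comp (Filter.tendsto_atTop_mono (fun j => Nat.le_succ (B j)) hBtop)
        have h4 : Filter.Tendsto (fun j => am η 0 * ((1:ℝ)/2)^(B j + 1))
            Filter.atTop (nhds 0) := by
          simpa using h3.const_mul (am η 0)
        apply tendsto_of_tendsto_of_tendsto_of_le_of_le tendsto_const_nhds h4 hξnn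
        intro j
        calc ξ j = cseq (B j) * am η (f (B j)) := rfl
          _ ≤ cseq (B j) * am η 0 := by
              apply mul_le_mul_of_nonneg_left (hAanti (Nat.zero_le _)) (cseq_pos _).le
          _ = am η 0 * ((1:ℝ)/2)^(B j + 1) := by rw [cseq]; ring
      have hξc : IsC0Star ξ := ⟨hξnn, hξsucc, hξ0⟩
      -- the majorization invariant
      have hinv : ∀ n, ∑ j ∈ range n, ξ j ≤
          (∑ i ∈ range (B n), cseq i) * (∑ j ∈ range n, η j)
            + cseq (B n) * n * am η (f (B n)) := by
        intro n
        induction n with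
        | zero => simp
        | succ n ih =>
          have hσmono : (∑ j ∈ range n, η j) ≤ ∑ j ∈ range (n+1), η j := by
            rw [Finset.sum_range_succ]; linarith [hηc.1 n]
          have hcnn : (0:ℝ) ≤ ∑ i ∈ range (B n), cseq i :=
            Finset.sum_nonneg fun i _ => (cseq_pos i).le
          have hstep : ∑ j ∈ range (n+1), ξ j ≤
              (∑ i ∈ range (B n), cseq i) * (∑ j ∈ range (n+1), η j)
                + cseq (B n) * ((n:ℝ)+1) * am η (f (B n)) := by
            rw [Finset.sum_range_succ]
            have h1 : (∑ i ∈ range (B n), cseq i) * (∑ j ∈ range n, η j)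
                ≤ (∑ i ∈ range (B n), cseq i) * (∑ j ∈ range (n+1), η j) :=
              mul_le_mul_of_nonneg_left hσmono hcnn
            have h2 : ξ n = cseq (B n) * am η (f (B n)) := rfl
            have h3 : cseq (B n) * ((n:ℝ)+1) * am η (f (B n))
                = cseq (B n) * (n:ℝ) * am η (f (B n)) + cseq (B n) * am η (f (B n)) := by
              ring
            linarith [ih]
          rcases eq_or_lt_of_le (hBmono (Nat.le_succ n)) with heq | hlt
          · rw [← heq]
            push_cast
            push_cast at hstep
            linarith [hstep]
          · -- B n < B (n+1)
            have hσnn : (0:ℝ) ≤ ∑ j ∈ range (n+1), η j :=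
              Finset.sum_nonneg fun j _ => hηc.1 j
            have hA1 : am η (f (B n)) ≤ am η n := hAanti (hB1 n)
            have hA2 : ((n:ℝ)+1) * am η n = ∑ j ∈ range (n+1), η j := by
              rw [am, mul_div_cancel₀ _ (by positivity : ((n:ℝ)+1) ≠ 0)]
            have h5 : cseq (B n) * ((n:ℝ)+1) * am η (f (B n))
                ≤ cseq (B n) * (∑ j ∈ range (n+1), η j) := by
              rw [← hA2]
              have := mul_le_mul_of_nonneg_left hA1 (by positivity : (0:ℝ) ≤ ((n:ℝ)+1))
              nlinarith [cseq_pos (B n)]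
            have h6 : (∑ i ∈ range (B n), cseq i) + cseq (B n)
                ≤ ∑ i ∈ range (B (n+1)), cseq i := by
              rw [← Finset.sum_range_succ]
              apply Finset.sum_le_sum_of_subset_of_nonneg
              · exact Finset.range_subset_range.mpr hlt
              · intro i _ _; exact (cseq_pos i).le
            have h7 : (0:ℝ) ≤ cseq (B (n+1)) * ((n:ℝ)+1) * am η (f (B (n+1))) := by
              have := hAc.1 (f (B (n+1)))
              have := (cseq_pos (B (n+1))).le
              positivity
            have h8 := mul_le_mul_of_nonneg_right h6 hσnn
            push_cast
            nlinarith [hstep]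
      have hmaj : Maj ξ η := by
        intro n
        cases n with
        | zero => simp
        | succ n =>
          have h0 := hinv (n+1)
          have hσnn : (0:ℝ) ≤ ∑ j ∈ range (n+1), η j :=
            Finset.sum_nonneg fun j _ => hηc.1 j
          have hA1 : am η (f (B (n+1))) ≤ am η n := by
            apply hAanti
            have := hB1 (n+1); omega
          have hA2 : ((n:ℝ)+1) * am η n = ∑ j ∈ range (n+1), η j := by
            rw [am, mul_div_cancel₀ _ (by positivity : ((n:ℝ)+1) ≠ 0)]
          have h5 : cseq (B (n+1)) * (↑(n+1):ℝ) * am η (f (B (n+1)))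
              ≤ cseq (B (n+1)) * (∑ j ∈ range (n+1), η j) := by
            rw [← hA2]
            push_cast
            nlinarith [cseq_pos (B (n+1)), mul_le_mul_of_nonneg_left hA1
              (by positivity : (0:ℝ) ≤ ((n:ℝ)+1))]
          have h6 : (∑ i ∈ range (B (n+1)), cseq i) + cseq (B (n+1)) ≤ 1 := by
            rw [← Finset.sum_range_succ]
            exact cseq_sum_le _
          have h8 := mul_le_mul_of_nonneg_right h6 hσnn
          nlinarith [h0, h5]
      -- ξ ∈ S, contradiction
      have hξS := hclosed ξ η hξc hηS hmaj
      rw [hS] at hξS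
      obtain ⟨-, k, m, hm, C, hC, hbd⟩ := hξS
      obtain ⟨t, ht⟩ := exists_nat_ge C
      set i := Nat.pair (Nat.pair k (m-1)) t with hi
      have hKi : Kdec i = k := Kdec_pair _ _ _
      have hMi : Mdec i = m := by rw [hi, Mdec_pair]; omega
      have hti : t ≤ i := Nat.right_le_pair _ _
      have hne := hfkey i
      rw [hKi, hMi] at hne
      have hb := hbd (f i)
      have hξfi : ξ (f i) = cseq i * am η (f i) := by rw [hξdef]; simp only; rw [hBf i]
      have hone : cseq i * 2^(i+1) = 1 := by
        rw [cseq, ← mul_pow]; norm_num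
      have hgnn : (0:ℝ) ≤ gen k (f i / m) := (hgen k).1 _
      have e : cseq i * (((i:ℝ)+1) * 2^(i+1) * gen k (f i / m)) = ((i:ℝ)+1) * gen k (f i / m) := by
        have : cseq i * (((i:ℝ)+1) * 2^(i+1) * gen k (f i / m))
            = ((i:ℝ)+1) * gen k (f i / m) * (cseq i * 2^(i+1)) := by ring
        rw [this, hone, mul_one]
      have h5 := mul_lt_mul_of_pos_left hne (cseq_pos i)
      rw [e] at h5
      have hCi : C ≤ (i:ℝ)+1 := by
        have : (t:ℝ) ≤ (i:ℝ) := by exact_mod_cast hti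
        linarith
      have h9 : C * gen k (f i / m) ≤ ((i:ℝ)+1) * gen k (f i / m) :=
        mul_le_mul_of_nonneg_right hCi hgnn
      rw [hξfi] at hb
      linarith
  · -- am-stable → am-closed
    intro hstable ξ η hξ hηS hmaj
    have hamη := hstable η hηS
    rw [hS] at hamη
    obtain ⟨hamc, k, m, hm, C, hC, hbd⟩ := hamη
    rw [hS]
    exact ⟨hξ, k, m, hm, C, hC, fun n =>
      (le_am' hξ n).trans ((am_le_am' hmaj n).trans (hbd n))⟩
end

section
/- For every ξ ∈ c₀* there exists ζ ∈ c₀* such that ξ_n ≤ (ζ_a)_n for all n, and such that for every η ∈ c₀* with ξ_n ≤ (η_a)_n for all n one has (ζ_a)_n ≤ (η_a)_n for all n. In other words, among all arithmetic means of c₀*-sequences that pointwise dominate ξ there is a pointwise smallest one. -/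
/-- Among all arithmetic means of `c₀*`-sequences pointwise dominating `ξ`
there is a pointwise smallest one. -/
theorem stmt_2 (ξ : ℕ → ℝ) (hξ : IsC0Star ξ) :
    ∃ ζ : ℕ → ℝ, IsC0Star ζ ∧ (∀ n, ξ n ≤ am ζ n) ∧
      ∀ η : ℕ → ℝ, IsC0Star η → (∀ n, ξ n ≤ am η n) → ∀ n, am ζ n ≤ am η n := by
  classical
  obtain ⟨hξ0, hξmono, hξlim⟩ := hξ
  -- the admissible set
  set A : Set (ℕ → ℝ) := {η | IsC0Star η ∧ ∀ n, ξ n ≤ am η n} with hA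
  -- ξ itself is admissible
  have hξA : ξ ∈ A := by
    refine ⟨⟨hξ0, hξmono, hξlim⟩, fun n => ?_⟩
    rw [am, le_div_iff₀ (by positivity)]
    have hξanti : Antitone ξ := antitone_nat_of_succ_le hξmono
    have : ∀ j ∈ Finset.range (n + 1), ξ n ≤ ξ j := fun j hj =>
      hξanti (Nat.lt_succ_iff.mp (Finset.mem_range.mp hj))
    calc ξ n * (↑n + 1) = ∑ _j ∈ Finset.range (n + 1), ξ n := by
          simp [Finset.sum_const, mul_comm]
      _ ≤ ∑ j ∈ Finset.range (n + 1), ξ j := Finset.sum_le_sum this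
  -- partial sums
  set S : (ℕ → ℝ) → ℕ → ℝ := fun η m => ∑ j ∈ Finset.range m, η j with hS
  set F : ℕ → ℝ := fun m => sInf ((fun η => S η m) '' A) with hF
  have hne : ∀ m, ((fun η => S η m) '' A).Nonempty := fun m => ⟨_, ξ, hξA, rfl⟩
  have hbdd : ∀ m, BddBelow ((fun η => S η m) '' A) := by
    intro m
    refine ⟨0, ?_⟩
    rintro x ⟨η, hη, rfl⟩
    exact Finset.sum_nonneg fun j _ => hη.1.1 j
  have hFle : ∀ m, ∀ η ∈ A, F m ≤ S η m := fun m η hη =>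
    csInf_le (hbdd m) ⟨η, hη, rfl⟩
  have hleF : ∀ m (x : ℝ), (∀ η ∈ A, x ≤ S η m) → x ≤ F m := by
    intro m x hx
    refine le_csInf (hne m) ?_
    rintro y ⟨η, hη, rfl⟩
    exact hx η hη
  have hF0 : F 0 = 0 := by
    have h1 : F 0 ≤ 0 := by simpa [hS] using hFle 0 ξ hξA
    have h2 : (0 : ℝ) ≤ F 0 := hleF 0 0 (by intro η hη; simp [hS])
    linarith
  have hFnonneg : ∀ m, 0 ≤ F m := fun m =>
    hleF m 0 fun η hη => Finset.sum_nonneg fun j _ => hη.1.1 j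
  have hFmono : ∀ m, F m ≤ F (m + 1) := by
    intro m
    refine hleF (m + 1) (F m) fun η hη => ?_
    refine le_trans (hFle m η hη) ?_
    rw [hS]
    simp only [Finset.sum_range_succ]
    exact le_add_of_nonneg_right (hη.1.1 m)
  have hFconc : ∀ m, F (m + 2) + F m ≤ 2 * F (m + 1) := by
    intro m
    have h2 : (F (m + 2) + F m) / 2 ≤ F (m + 1) := by
      refine hleF (m + 1) _ fun η hη => ?_
      have key : S η (m + 2) + S η m ≤ 2 * S η (m + 1) := by
        have h := hη.1.2.1 m
        simp only [hS, Finset.sum_range_succ]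
        linarith
      have h1 := hFle (m + 2) η hη
      have h3 := hFle m η hη
      linarith
    linarith
  -- the candidate ζ
  set ζ : ℕ → ℝ := fun m => F (m + 1) - F m with hζ
  have hsum : ∀ m, ∑ j ∈ Finset.range m, ζ j = F m := by
    intro m
    induction m with
    | zero => simp [hF0]
    | succ m ih => rw [Finset.sum_range_succ, ih, hζ]; ring
  have hζ0 : ∀ n, 0 ≤ ζ n := fun n => by simpa [hζ] using hFmono n
  have hζmono : ∀ n, ζ (n + 1) ≤ ζ n := by
    intro n
    have := hFconc n
    simp only [hζ]
    linarith
  have hζanti : Antitone ζ := antitone_nat_of_succ_le hζmono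
  -- limit of ζ
  have hbdd' : BddBelow (Set.range ζ) := ⟨0, by rintro x ⟨n, rfl⟩; exact hζ0 n⟩
  have hlimL : Filter.Tendsto ζ Filter.atTop (nhds (⨅ n, ζ n)) :=
    tendsto_atTop_ciInf hζanti hbdd'
  have hL0 : (⨅ n, ζ n) = 0 := by
    have hLge : (0 : ℝ) ≤ ⨅ n, ζ n := le_ciInf hζ0
    have hLle : (⨅ n, ζ n) ≤ 0 := by
      set L := ⨅ n, ζ n with hLdef
      have key : ∀ m : ℕ, (m : ℝ) * L ≤ (∑ i ∈ Finset.range m, ξ i) := by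
        intro m
        have h1 : (m : ℝ) * L ≤ ∑ j ∈ Finset.range m, ζ j := by
          calc (m : ℝ) * L = ∑ _j ∈ Finset.range m, L := by
                simp [Finset.sum_const, mul_comm]
            _ ≤ ∑ j ∈ Finset.range m, ζ j :=
                Finset.sum_le_sum fun j _ => ciInf_le hbdd' j
        have h2 : F m ≤ ∑ i ∈ Finset.range m, ξ i := by
          simpa [hS] using hFle m ξ hξA
        rw [hsum] at h1
        linarith
      have hces := hξlim.cesaro
      refine ge_of_tendsto hces ?_
      filter_upwards [Filter.eventually_ge_atTop 1] with m hm
      have hmpos : (0 : ℝ) < m := by exact_mod_cast hm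
      have h3 : (↑m)⁻¹ * ((m : ℝ) * L) ≤ (↑m)⁻¹ * ∑ i ∈ Finset.range m, ξ i :=
        mul_le_mul_of_nonneg_left (key m) (by positivity)
      rwa [inv_mul_cancel_left₀ hmpos.ne'] at h3
    linarith
  refine ⟨ζ, ⟨hζ0, hζmono, hL0 ▸ hlimL⟩, ?_, ?_⟩
  · -- domination
    intro n
    rw [am, le_div_iff₀ (by positivity)]
    have : ξ n * (↑n + 1) ≤ F (n + 1) := by
      refine hleF (n + 1) _ fun η hη => ?_
      have := hη.2 n
      rw [am, le_div_iff₀ (by positivity)] at this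
      calc ξ n * (↑n + 1) ≤ (∑ j ∈ Finset.range (n + 1), η j) := this
        _ = S η (n + 1) := rfl
    calc ξ n * (↑n + 1) ≤ F (n + 1) := this
      _ = ∑ j ∈ Finset.range (n + 1), ζ j := (hsum (n + 1)).symm
  · -- minimality
    intro η hη hηdom n
    rw [am, am, div_le_div_iff₀ (by positivity) (by positivity)]
    have h1 : (∑ j ∈ Finset.range (n + 1), ζ j) ≤ ∑ j ∈ Finset.range (n + 1), η j := by
      rw [hsum]
      exact hFle (n + 1) η ⟨hη, hηdom⟩
    nlinarith [Finset.sum_nonneg (fun j (_ : j ∈ Finset.range (n+1)) => hη.1 j),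
      h1, (by positivity : (0:ℝ) < (n:ℝ) + 1)]
end

section
/- Let c : {1,2,...} → ℝ be nonnegative, nonincreasing, and converging to 0, and let ψ be the largest convex minorant of c, i.e., ψ_n := sup{φ_n : φ is a convex sequence (φ_{k+1} − φ_k is nondecreasing in k) with φ_k ≤ c_k for all k}. Then ψ_n ≥ (1/2)·c_{2n} for every n, i.e., (1/2)·D_{1/2}c ≤ ψ pointwise. -/
/-- A convex sequence: the successive differences are nondecreasing. -/
def IsConvexSeq (φ : ℕ → ℝ) : Prop :=
  ∀ k, φ (k + 1) - φ k ≤ φ (k + 2) - φ (k + 1)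

/-- If `ψ` is the largest convex minorant of `c`, then `ψ ≥ (1/2)·D_{1/2}c` pointwise. -/
theorem stmt_3 (c : ℕ → ℝ) (hc : IsC0Star c) (ψ : ℕ → ℝ)
    (hψ : ∀ n, IsLUB {y : ℝ | ∃ φ : ℕ → ℝ, IsConvexSeq φ ∧ (∀ k, φ k ≤ c k) ∧ y = φ n} (ψ n)) :
    ∀ n, (1 / 2 : ℝ) * c (2 * n + 1) ≤ ψ n := by
  intro n
  obtain ⟨hpos, hdec, -⟩ := hc
  have hanti : Antitone c := antitone_nat_of_succ_le hdec
  set a : ℝ := c (2 * n + 1) with ha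
  have ha0 : 0 ≤ a := hpos _
  set N : ℝ := ((2 * n + 1 : ℕ) : ℝ) with hN
  have hN0 : 0 < N := by
    rw [hN]
    exact_mod_cast Nat.succ_pos (2 * n)
  set φ : ℕ → ℝ := fun k => a * (1 - (k : ℝ) / N) with hφ
  have hconv : IsConvexSeq φ := by
    intro k
    simp only [hφ]
    push_cast
    ring_nf
    exact le_rfl
  have hmin : ∀ k, φ k ≤ c k := by
    intro k
    rcases le_or_gt (k : ℝ) N with h | h
    · have h1 : φ k ≤ a := by
        simp only [hφ]
        nlinarith [div_nonneg (Nat.cast_nonneg k : (0:ℝ) ≤ k) hN0.le]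
      refine h1.trans ?_
      exact hanti (by rw [hN] at h; exact_mod_cast h)
    · have h1 : φ k ≤ 0 := by
        simp only [hφ]
        have : (1 : ℝ) - (k : ℝ) / N ≤ 0 := by
          rw [sub_nonpos, le_div_iff₀ hN0]
          linarith
        nlinarith
      exact h1.trans (hpos k)
  have hmem : φ n ∈ {y : ℝ | ∃ φ : ℕ → ℝ, IsConvexSeq φ ∧ (∀ k, φ k ≤ c k) ∧ y = φ n} :=
    ⟨φ, hconv, hmin, rfl⟩
  have hle : φ n ≤ ψ n := (hψ n).1 hmem
  refine le_trans ?_ hle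
  simp only [hφ, hN]
  have hn : (n : ℝ) / ((2 * n + 1 : ℕ) : ℝ) ≤ 1 / 2 := by
    rw [div_le_div_iff₀ (by exact_mod_cast Nat.succ_pos (2 * n)) (by norm_num)]
    push_cast
    linarith
  nlinarith
end

section
/- Let ξ ∈ (ℓ¹)*. Then the following conditions are equivalent: (i) ξ_{a∞} = O(D_mξ) for some m ∈ ℕ (i.e., ξ is regular at infinity, (ξ) = (ξ)_{a∞}); (ii) ξ_{a∞} = O(ξ); (iii) there exist C > 0 and p > 1 such that ξ_n ≤ C·(m/n)^p·ξ_m for all integers n ≥ m ≥ 1; (iv) (ξ_{a∞})_{a∞} = O(ξ_{a∞}). -/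
/-- The arithmetic mean at infinity. -/
noncomputable def amInf (ξ : ℕ → ℝ) (n : ℕ) : ℝ :=
  (∑' k : ℕ, ξ (n + 1 + k)) / (n + 1)

/-- `ξ = O(η)`: `ξ_n ≤ C·η_n` for all `n`, for some `C > 0`. -/
def BigO (ξ η : ℕ → ℝ) : Prop :=
  ∃ C : ℝ, 0 < C ∧ ∀ n, ξ n ≤ C * η n

noncomputable def tailT (ξ : ℕ → ℝ) (n : ℕ) : ℝ := ∑' k, ξ (n+1+k)

lemma amInf_eq (ξ : ℕ → ℝ) (n : ℕ) : amInf ξ n = tailT ξ n / ((n:ℝ)+1) := rfl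

section
variable {ξ : ℕ → ℝ}

lemma sumShift (hsum : Summable ξ) (n : ℕ) : Summable (fun k => ξ (n+1+k)) := by
  simpa [add_comm] using (summable_nat_add_iff (n+1)).2 hsum

lemma tailT_nonneg (h0 : ∀ n, 0 ≤ ξ n) (n : ℕ) : 0 ≤ tailT ξ n :=
  tsum_nonneg fun _ => h0 _

lemma amInf_nonneg (h0 : ∀ n, 0 ≤ ξ n) (n : ℕ) : 0 ≤ amInf ξ n := by
  rw [amInf_eq]
  exact div_nonneg (tailT_nonneg h0 n) (by positivity)

lemma tailT_succ (hsum : Summable ξ) (n : ℕ) :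
    tailT ξ n = ξ (n+1) + tailT ξ (n+1) := by
  have h := Summable.tsum_eq_zero_add (sumShift hsum n)
  rw [tailT, h, tailT]
  congr 1
  exact tsum_congr fun k => by congr 1; omega

lemma tailT_antitone (h0 : ∀ n, 0 ≤ ξ n) (hsum : Summable ξ) :
    Antitone (tailT ξ) := by
  refine antitone_nat_of_succ_le fun n => ?_
  rw [tailT_succ hsum n]
  linarith [h0 (n+1)]

lemma tailT_sub (hsum : Summable ξ) {m n : ℕ} (h : m ≤ n) :
    tailT ξ m = tailT ξ n + ∑ j ∈ Finset.Ico m n, ξ (j+1) := by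
  induction n, h using Nat.le_induction with
  | base => simp
  | succ n hmn ih =>
    rw [Finset.sum_Ico_succ_top hmn, tailT_succ hsum n] at *
    linarith

lemma block_lower (hmono : Antitone ξ) {m n : ℕ} (h : m ≤ n) :
    (n - m : ℝ) * ξ n ≤ ∑ j ∈ Finset.Ico m n, ξ (j+1) := by
  have hb : ∀ j ∈ Finset.Ico m n, ξ n ≤ ξ (j+1) := by
    intro j hj
    exact hmono (by simp at hj; omega)
  calc (n - m : ℝ) * ξ n = (Finset.Ico m n).card • ξ n := by
        rw [Nat.card_Ico, nsmul_eq_mul]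
        congr 1
        push_cast [Nat.cast_sub h]
        ring
    _ ≤ ∑ j ∈ Finset.Ico m n, ξ (j+1) := Finset.card_nsmul_le_sum _ _ _ hb

lemma block_upper (hmono : Antitone ξ) {m n : ℕ} (h : m ≤ n) :
    ∑ j ∈ Finset.Ico m n, ξ (j+1) ≤ (n - m : ℝ) * ξ (m+1) := by
  have hb : ∀ j ∈ Finset.Ico m n, ξ (j+1) ≤ ξ (m+1) := by
    intro j hj
    exact hmono (by simp at hj; omega)
  calc ∑ j ∈ Finset.Ico m n, ξ (j+1) ≤ (Finset.Ico m n).card • ξ (m+1) :=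
        Finset.sum_le_card_nsmul _ _ _ hb
    _ = (n - m : ℝ) * ξ (m+1) := by
        rw [Nat.card_Ico, nsmul_eq_mul]
        congr 1
        push_cast [Nat.cast_sub h]
        ring
end

lemma key_bern (s a : ℝ) (hs : 0 < s) (ha : 1 ≤ a) :
    s * (a+1)^(-(1+s)) ≤ a^(-s) - (a+1)^(-s) := by
  have ha0 : 0 < a := by linarith
  have ha1 : 0 < a + 1 := by linarith
  set A := (a+1)^(-s) with hAdef
  set B := (1+1/a)^s with hBdef
  have hA0 : 0 ≤ A := Real.rpow_nonneg (by linarith) _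
  have hB1 : 1 + s/(a+1) ≤ B := by
    have h2 : 1 + (1+s)*(1/a) ≤ (1+1/a)^(1+s) :=
      one_add_mul_self_le_rpow_one_add
        (le_trans (by norm_num : (-1:ℝ) ≤ 0) (by positivity)) (by linarith)
    have h3 : (1+1/a)^(1+s) = (1+1/a) * B := by
      rw [hBdef, Real.rpow_add (by positivity), Real.rpow_one]
    rw [h3] at h2
    have h4 : a + 1 + s ≤ B * (a+1) := by
      have := mul_le_mul_of_nonneg_right h2 ha0.le
      calc a + 1 + s = (1 + (1+s)*(1/a)) * a := by field_simp; ring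
        _ ≤ (1+1/a) * B * a := this
        _ = B * (a+1) := by field_simp
    rw [show 1 + s/(a+1) = (a+1+s)/(a+1) by field_simp, div_le_iff₀ ha1]
    linarith
  have hfact : A * B = a^(-s) := by
    rw [hAdef, hBdef, Real.rpow_neg (by linarith : (0:ℝ) ≤ a+1), inv_mul_eq_div,
      ← Real.div_rpow (by positivity) (by linarith : (0:ℝ) ≤ a+1),
      (show (1+1/a)/(a+1) = a⁻¹ by field_simp),
      Real.inv_rpow ha0.le, ← Real.rpow_neg ha0.le]
  have hsplit : (a+1)^(-(1+s)) = A * (a+1)⁻¹ := by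
    rw [hAdef, show -(1+s) = -s + (-1) by ring, Real.rpow_add ha1, Real.rpow_neg_one]
  rw [← hfact, hsplit]
  have h5 := mul_le_mul_of_nonneg_left hB1 hA0
  have h6 : A*(1+s/(a+1)) = A + s*(A*(a+1)⁻¹) := by field_simp
  linarith

lemma tail_bound (s : ℝ) (hs : 0 < s) (n : ℕ) :
    Summable (fun j : ℕ => ((n:ℝ)+2+j)^(-(1+s))) ∧
    ∑' j : ℕ, ((n:ℝ)+2+j)^(-(1+s)) ≤ ((n:ℝ)+1)^(-s)/s := by
  set f : ℕ → ℝ := fun j => ((n:ℝ)+1+j)^(-s) with hf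
  have hpt : ∀ j : ℕ, ((n:ℝ)+2+j)^(-(1+s)) ≤ (f j - f (j+1))/s := by
    intro j
    have h1 : (1:ℝ) ≤ (n:ℝ)+1+j := by
      have h01 : (0:ℝ) ≤ (n:ℝ) := Nat.cast_nonneg n
      have h02 : (0:ℝ) ≤ (j:ℝ) := Nat.cast_nonneg j
      linarith
    have h2 := key_bern s ((n:ℝ)+1+j) hs h1
    rw [le_div_iff₀ hs]
    have e1 : ((n:ℝ)+1+j) + 1 = (n:ℝ)+2+j := by ring
    have e2 : f (j+1) = ((n:ℝ)+2+j)^(-s) := by simp only [hf]; push_cast; ring_nf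
    rw [e1] at h2
    calc ((n:ℝ)+2+j)^(-(1+s)) * s = s * ((n:ℝ)+2+j)^(-(1+s)) := mul_comm _ _
      _ ≤ ((n:ℝ)+1+j)^(-s) - ((n:ℝ)+2+j)^(-s) := h2
      _ = f j - f (j+1) := by rw [e2]
  have hnn : ∀ j : ℕ, 0 ≤ ((n:ℝ)+2+j)^(-(1+s)) := fun j => Real.rpow_nonneg (by positivity) _
  have hpart : ∀ N : ℕ, ∑ j ∈ Finset.range N, ((n:ℝ)+2+j)^(-(1+s)) ≤ ((n:ℝ)+1)^(-s)/s := by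
    intro N
    have h0N : 0 ≤ f N := Real.rpow_nonneg (by positivity) _
    calc ∑ j ∈ Finset.range N, ((n:ℝ)+2+j)^(-(1+s))
        ≤ ∑ j ∈ Finset.range N, (f j - f (j+1))/s :=
          Finset.sum_le_sum fun j _ => hpt j
      _ = (∑ j ∈ Finset.range N, (f j - f (j+1)))/s := by rw [Finset.sum_div]
      _ = (f 0 - f N)/s := by rw [Finset.sum_range_sub' f]
      _ ≤ f 0 / s := by gcongr; linarith
      _ = ((n:ℝ)+1)^(-s)/s := by simp only [hf]; norm_num
  exact ⟨summable_of_sum_range_le hnn hpart, Real.tsum_le_of_sum_range_le hnn hpart⟩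

section
variable {ξ : ℕ → ℝ}

lemma decay (h0 : ∀ n, 0 ≤ ξ n) (hmono : Antitone ξ) (hsum : Summable ξ)
    {C : ℝ} (hC : 0 < C) (h : ∀ n, tailT ξ n ≤ C * ((n:ℝ)+1) * ξ n) :
    ∃ q K : ℝ, 0 < q ∧ 0 < K ∧ ∀ m n : ℕ, m ≤ n →
      tailT ξ n ≤ K * (((m:ℝ)+1)/((n:ℝ)+1))^q * tailT ξ m := by
  set r : ℝ := 2*C/(2*C+1) with hrdef
  have hr0 : 0 < r := by positivity
  have hr1 : r < 1 := by
    rw [hrdef, div_lt_one (by linarith)]; linarith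
  have hA : ∀ n : ℕ, tailT ξ (2*n+1) ≤ r * tailT ξ n := by
    intro n
    have hsub := tailT_sub hsum (show n ≤ 2*n+1 by omega)
    have hblock := block_lower hmono (show n ≤ 2*n+1 by omega)
    have hcast : ((2*n+1 : ℕ):ℝ) - (n:ℝ) = (n:ℝ)+1 := by push_cast; ring
    rw [hcast] at hblock
    have hx := h (2*n+1)
    have hxc : ((2*n+1:ℕ):ℝ) + 1 = 2*((n:ℝ)+1) := by push_cast; ring
    rw [hxc] at hx
    have hξnn := h0 (2*n+1)
    have hT1nn := tailT_nonneg h0 (2*n+1)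
    rw [hrdef, div_mul_eq_mul_div, le_div_iff₀ (by linarith : (0:ℝ) < 2*C+1)]
    nlinarith [hsub, hblock, hx]
  have hB : ∀ (m k : ℕ), tailT ξ (2^k*(m+1)-1) ≤ r^k * tailT ξ m := by
    intro m k
    induction k with
    | zero => simp
    | succ k ih =>
      have hpos : 0 < 2^k*(m+1) := by positivity
      have hE : 2^(k+1)*(m+1) = 2*(2^k*(m+1)) := by rw [pow_succ]; ring
      have ha : 2^(k+1)*(m+1)-1 = 2*(2^k*(m+1)-1)+1 := by omega
      rw [ha]
      calc tailT ξ (2*(2^k*(m+1)-1)+1) ≤ r * tailT ξ (2^k*(m+1)-1) := hA _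
        _ ≤ r * (r^k * tailT ξ m) := by
            exact mul_le_mul_of_nonneg_left ih hr0.le
        _ = r^(k+1) * tailT ξ m := by ring
  refine ⟨-Real.logb 2 r, (2:ℝ)^(-Real.logb 2 r),
    neg_pos.2 (Real.logb_neg (by norm_num : (1:ℝ) < 2) hr0 hr1),
    Real.rpow_pos_of_pos two_pos _, ?_⟩
  set q := -Real.logb 2 r with hqdef
  have hq : 0 < q := neg_pos.2 (Real.logb_neg (by norm_num : (1:ℝ) < 2) hr0 hr1)
  have hr2 : r = (2:ℝ)^(-q) := by
    rw [hqdef, neg_neg, Real.rpow_logb two_pos (by norm_num) hr0]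
  intro m n hmn
  set k := Nat.log 2 ((n+1)/(m+1)) with hkdef
  have hdiv1 : 1 ≤ (n+1)/(m+1) := (Nat.one_le_div_iff (by omega)).2 (by omega)
  have h1 : 2^k*(m+1) ≤ n+1 := by
    have hp := Nat.pow_log_le_self 2 (show (n+1)/(m+1) ≠ 0 by omega)
    rw [← hkdef] at hp
    calc 2^k*(m+1) ≤ ((n+1)/(m+1))*(m+1) := Nat.mul_le_mul_right _ hp
      _ ≤ n+1 := Nat.div_mul_le_self _ _
  have h2 : n+1 < 2^(k+1)*(m+1) := by
    have hlt := Nat.lt_pow_succ_log_self (show 1 < 2 by norm_num) ((n+1)/(m+1))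
    rw [← hkdef] at hlt
    exact (Nat.div_lt_iff_lt_mul (show 0 < m+1 by omega)).1 hlt
  have hstep1 : tailT ξ n ≤ r^k * tailT ξ m := by
    refine le_trans (tailT_antitone h0 hsum (show 2^k*(m+1)-1 ≤ n by omega)) (hB m k)
  have hm1 : (0:ℝ) < (m:ℝ)+1 := by positivity
  have hn1 : (0:ℝ) < (n:ℝ)+1 := by positivity
  have hratio : ((n:ℝ)+1)/(2*((m:ℝ)+1)) < 2^k := by
    have hc : ((n:ℝ)+1) < 2^(k+1)*((m:ℝ)+1) := by exact_mod_cast h2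
    rw [div_lt_iff₀ (by positivity)]
    calc ((n:ℝ)+1) < 2^(k+1)*((m:ℝ)+1) := hc
      _ = 2^k * (2*((m:ℝ)+1)) := by ring
  have hrk : (r:ℝ)^k ≤ (2:ℝ)^q * (((m:ℝ)+1)/((n:ℝ)+1))^q := by
    have hbase : (0:ℝ) < ((n:ℝ)+1)/(2*((m:ℝ)+1)) := by positivity
    have h2k : (0:ℝ) < (2:ℝ)^k := by positivity
    have hmono2 : (((n:ℝ)+1)/(2*((m:ℝ)+1)))^q ≤ ((2:ℝ)^k)^q :=
      Real.rpow_le_rpow hbase.le hratio.le hq.le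
    have hinv : (((2:ℝ)^k)^q)⁻¹ ≤ ((((n:ℝ)+1)/(2*((m:ℝ)+1)))^q)⁻¹ := by
      apply inv_anti₀ (Real.rpow_pos_of_pos hbase _) hmono2
    have e1 : (r:ℝ)^k = (((2:ℝ)^k)^q)⁻¹ := by
      rw [hr2, ← Real.rpow_natCast ((2:ℝ)^(-q)) k, ← Real.rpow_natCast (2:ℝ) k,
        ← Real.rpow_mul (by norm_num), ← Real.rpow_mul (by norm_num),
        ← Real.rpow_neg (by norm_num)]
      ring_nf
    have e2 : ((((n:ℝ)+1)/(2*((m:ℝ)+1)))^q)⁻¹ = (2:ℝ)^q * (((m:ℝ)+1)/((n:ℝ)+1))^q := by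
      rw [← Real.inv_rpow hbase.le,
        (show (((n:ℝ)+1)/(2*((m:ℝ)+1)))⁻¹ = 2 * (((m:ℝ)+1)/((n:ℝ)+1)) by field_simp),
        Real.mul_rpow (by norm_num) (by positivity)]
    rw [e1, ← e2]
    exact hinv
  calc tailT ξ n ≤ r^k * tailT ξ m := hstep1
    _ ≤ (2:ℝ)^q * (((m:ℝ)+1)/((n:ℝ)+1))^q * tailT ξ m :=
        mul_le_mul_of_nonneg_right hrk (tailT_nonneg h0 m)
end

section
variable {ξ : ℕ → ℝ}

lemma toIII (h0 : ∀ n, 0 ≤ ξ n) (hmono : Antitone ξ) (hsum : Summable ξ)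
    {C : ℝ} (hC : 0 < C) (h : ∀ n, tailT ξ n ≤ C * ((n:ℝ)+1) * ξ n) :
    ∃ C' p : ℝ, 0 < C' ∧ 1 < p ∧
      ∀ m n : ℕ, m ≤ n → ξ n ≤ C' * (((m:ℝ)+1)/((n:ℝ)+1))^p * ξ m := by
  obtain ⟨q, K, hq, hK, hdec⟩ := decay h0 hmono hsum hC h
  refine ⟨(2:ℝ)^(q+1) + 4*K*C*2^q, q+1, by positivity, by linarith, ?_⟩
  intro m n hmn
  have hm1 : (0:ℝ) < (m:ℝ)+1 := by positivity
  have hn1 : (0:ℝ) < (n:ℝ)+1 := by positivity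
  set R := ((m:ℝ)+1)/((n:ℝ)+1) with hRdef
  have hrat : (0:ℝ) < R := by positivity
  have hratp : (0:ℝ) ≤ R^(q+1) := (Real.rpow_pos_of_pos hrat _).le
  have hξm : 0 ≤ ξ m := h0 m
  have hEnn : (0:ℝ) ≤ 4*K*C*2^q := by positivity
  by_cases hcase : n ≤ 2*m+1
  · have h1 : (1:ℝ)/2 ≤ R := by
      rw [hRdef, div_le_div_iff₀ (by norm_num) hn1]
      have : (n:ℝ) ≤ 2*(m:ℝ)+1 := by exact_mod_cast hcase
      linarith
    have h2 : ((1:ℝ)/2)^(q+1) ≤ R^(q+1) :=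
      Real.rpow_le_rpow (by norm_num) h1 (by linarith)
    have h3 : ((1:ℝ)/2)^(q+1) = ((2:ℝ)^(q+1))⁻¹ := by
      rw [one_div, Real.inv_rpow (by norm_num)]
    have h4 : (1:ℝ) ≤ (2:ℝ)^(q+1) * R^(q+1) := by
      have hpow : (0:ℝ) < (2:ℝ)^(q+1) := Real.rpow_pos_of_pos two_pos _
      calc (1:ℝ) = (2:ℝ)^(q+1) * ((2:ℝ)^(q+1))⁻¹ := (mul_inv_cancel₀ hpow.ne').symm
        _ ≤ (2:ℝ)^(q+1) * R^(q+1) := by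
            apply mul_le_mul_of_nonneg_left _ hpow.le
            rw [← h3]; exact h2
    calc ξ n ≤ ξ m := hmono hmn
      _ = 1 * ξ m := (one_mul _).symm
      _ ≤ ((2:ℝ)^(q+1) * R^(q+1)) * ξ m := mul_le_mul_of_nonneg_right h4 hξm
      _ ≤ ((2:ℝ)^(q+1) + 4*K*C*2^q) * R^(q+1) * ξ m := by
          nlinarith [mul_nonneg hratp hξm]
  · push_neg at hcase
    set a := m + (n-m)/2 with hadef
    have hma : m ≤ a := by omega
    have han : a ≤ n := by omega
    have hna : ((n:ℝ)+1)/4 ≤ (n:ℝ) - (a:ℝ) := by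
      have h5 : n + 1 ≤ 4*(n-a) := by omega
      have h6 := (Nat.cast_le (α := ℝ)).2 h5
      push_cast [Nat.cast_sub han] at h6
      linarith
    have ha1 : ((n:ℝ)+1)/2 ≤ (a:ℝ)+1 := by
      have h5 : n + 1 ≤ 2*(a+1) := by omega
      have h6 := (Nat.cast_le (α := ℝ)).2 h5
      push_cast at h6
      linarith
    have ha0 : (0:ℝ) < (a:ℝ)+1 := by positivity
    have hblock : ((n:ℝ)-(a:ℝ)) * ξ n ≤ tailT ξ a := by
      have h7 := block_lower hmono han
      have h8 := tailT_sub hsum han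
      have h9 := tailT_nonneg h0 n
      linarith
    set X := R^q with hXdef
    have hX0 : (0:ℝ) ≤ X := (Real.rpow_pos_of_pos hrat _).le
    have f3 : (((m:ℝ)+1)/((a:ℝ)+1))^q ≤ (2:ℝ)^q * X := by
      have hb1 : ((m:ℝ)+1)/((a:ℝ)+1) ≤ 2*R := by
        rw [hRdef, show 2*(((m:ℝ)+1)/((n:ℝ)+1)) = ((m:ℝ)+1)/(((n:ℝ)+1)/2) by field_simp]
        gcongr
      calc (((m:ℝ)+1)/((a:ℝ)+1))^q ≤ (2*R)^q :=
            Real.rpow_le_rpow (by positivity) hb1 hq.le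
        _ = (2:ℝ)^q * X := by
            rw [Real.mul_rpow (by norm_num) hrat.le, hXdef]
    have f2 := hdec m a hma
    have f4 := h m
    have hTm0 := tailT_nonneg h0 m
    have step2 : tailT ξ a ≤ K * ((2:ℝ)^q * X) * (C*((m:ℝ)+1)*ξ m) := by
      calc tailT ξ a ≤ K * (((m:ℝ)+1)/((a:ℝ)+1))^q * tailT ξ m := f2
        _ ≤ K * ((2:ℝ)^q * X) * tailT ξ m := by
            apply mul_le_mul_of_nonneg_right _ hTm0
            exact mul_le_mul_of_nonneg_left f3 hK.le
        _ ≤ K * ((2:ℝ)^q * X) * (C*((m:ℝ)+1)*ξ m) := by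
            apply mul_le_mul_of_nonneg_left f4 (by positivity)
    have step4 : (((n:ℝ)+1)/4) * ξ n ≤ K * ((2:ℝ)^q * X) * (C*((m:ℝ)+1)*ξ m) := by
      calc (((n:ℝ)+1)/4) * ξ n ≤ ((n:ℝ)-(a:ℝ)) * ξ n :=
            mul_le_mul_of_nonneg_right hna (h0 n)
        _ ≤ tailT ξ a := hblock
        _ ≤ _ := step2
    have step5 : ξ n ≤ 4*K*C*2^q * (X * R) * ξ m := by
      rw [mul_comm] at step4
      have h11 := (le_div_iff₀ (show (0:ℝ) < ((n:ℝ)+1)/4 by positivity)).2 step4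
      calc ξ n ≤ K * ((2:ℝ)^q * X) * (C*((m:ℝ)+1)*ξ m) / (((n:ℝ)+1)/4) := h11
        _ = 4*K*C*2^q * (X * R) * ξ m := by
            rw [hRdef]; field_simp
    have hXR : R^(q+1) = X * R := by
      rw [hXdef, Real.rpow_add hrat, Real.rpow_one]
    rw [hXR]
    nlinarith [mul_nonneg (mul_nonneg hX0 hrat.le) hξm,
      Real.rpow_pos_of_pos (show (0:ℝ) < 2 by norm_num) (q+1)]
end

section
variable {ξ : ℕ → ℝ}

lemma IIIto (h0 : ∀ n, 0 ≤ ξ n) (hsum : Summable ξ) {C p : ℝ} (hC : 0 < C) (hp : 1 < p)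
    (h : ∀ m n : ℕ, m ≤ n → ξ n ≤ C * (((m:ℝ)+1)/((n:ℝ)+1))^p * ξ m) :
    ∀ n, tailT ξ n ≤ (C/(p-1)) * ((n:ℝ)+1) * ξ n := by
  intro n
  set s := p - 1 with hs
  have hs0 : 0 < s := by simp only [hs]; linarith
  have hps : p = 1 + s := by rw [hs]; ring
  obtain ⟨hsumm, htsum⟩ := tail_bound s hs0 n
  have hn1 : (0:ℝ) < (n:ℝ)+1 := by positivity
  have hpt : ∀ k : ℕ, ξ (n+1+k) ≤ (C * ξ n * ((n:ℝ)+1)^p) * ((n:ℝ)+2+k)^(-(1+s)) := by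
    intro k
    have h1 := h n (n+1+k) (by omega)
    have e1 : ((n+1+k:ℕ):ℝ)+1 = (n:ℝ)+2+k := by push_cast; ring
    rw [e1] at h1
    have e2 : (((n:ℝ)+1)/((n:ℝ)+2+k))^p = ((n:ℝ)+1)^p * ((n:ℝ)+2+k)^(-(1+s)) := by
      rw [Real.div_rpow hn1.le (by positivity), div_eq_mul_inv,
        ← Real.rpow_neg (by positivity), ← hps]
    rw [e2] at h1
    refine le_trans h1 (le_of_eq ?_)
    ring
  have hTle : tailT ξ n ≤ (C * ξ n * ((n:ℝ)+1)^p) * ∑' k : ℕ, ((n:ℝ)+2+k)^(-(1+s)) := by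
    rw [tailT, ← tsum_mul_left]
    exact Summable.tsum_le_tsum hpt (sumShift hsum n) (hsumm.mul_left _)
  have hfac : (0:ℝ) ≤ C * ξ n * ((n:ℝ)+1)^p :=
    mul_nonneg (mul_nonneg hC.le (h0 n)) (Real.rpow_nonneg hn1.le _)
  have hcollapse : ((n:ℝ)+1)^p * ((n:ℝ)+1)^(-s) = (n:ℝ)+1 := by
    rw [← Real.rpow_add hn1, hps, show 1 + s + -s = 1 by ring, Real.rpow_one]
  calc tailT ξ n ≤ (C * ξ n * ((n:ℝ)+1)^p) * (((n:ℝ)+1)^(-s)/s) :=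
        hTle.trans (mul_le_mul_of_nonneg_left htsum hfac)
    _ = (C/s) * (((n:ℝ)+1)^p * ((n:ℝ)+1)^(-s)) * ξ n := by
        field_simp
    _ = (C/s) * ((n:ℝ)+1) * ξ n := by rw [hcollapse]

lemma to_iv (h0 : ∀ n, 0 ≤ ξ n) (hmono : Antitone ξ) (hsum : Summable ξ)
    {C : ℝ} (hC : 0 < C) (h : ∀ n, tailT ξ n ≤ C * ((n:ℝ)+1) * ξ n)
    (hηsum : Summable (amInf ξ)) :
    ∃ C' : ℝ, 0 < C' ∧ ∀ n, amInf (amInf ξ) n ≤ C' * amInf ξ n := by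
  obtain ⟨q, K, hq, hK, hdec⟩ := decay h0 hmono hsum hC h
  refine ⟨K/q, by positivity, ?_⟩
  intro n
  obtain ⟨hsumm, htsum⟩ := tail_bound q hq n
  have hn1 : (0:ℝ) < (n:ℝ)+1 := by positivity
  have hT0 := tailT_nonneg h0 n
  have hpt : ∀ k : ℕ, amInf ξ (n+1+k) ≤ (K * tailT ξ n * ((n:ℝ)+1)^q) * ((n:ℝ)+2+k)^(-(1+q)) := by
    intro k
    have e1 : ((n+1+k:ℕ):ℝ)+1 = (n:ℝ)+2+k := by push_cast; ring
    have hy : (0:ℝ) < (n:ℝ)+2+k := by positivity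
    have h1 := hdec n (n+1+k) (by omega)
    rw [e1] at h1
    rw [amInf_eq, e1]
    rw [div_le_iff₀ hy]
    refine le_trans h1 (le_of_eq ?_)
    rw [Real.div_rpow hn1.le hy.le, div_eq_mul_inv ((_:ℝ)^q) _,
      ← Real.rpow_neg hy.le]
    have e3 : ((n:ℝ)+2+k)^(-(1+q)) * ((n:ℝ)+2+k) = ((n:ℝ)+2+k)^(-q) := by
      nth_rewrite 2 [show ((n:ℝ)+2+k) = ((n:ℝ)+2+k)^(1:ℝ) from (Real.rpow_one _).symm]
      rw [← Real.rpow_add hy]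
      ring_nf
    rw [mul_assoc, mul_assoc, e3.symm]
    ring_nf
  have hTle : tailT (amInf ξ) n ≤ (K * tailT ξ n * ((n:ℝ)+1)^q) * ∑' k : ℕ, ((n:ℝ)+2+k)^(-(1+q)) := by
    rw [tailT, ← tsum_mul_left]
    exact Summable.tsum_le_tsum hpt (sumShift hηsum n) (hsumm.mul_left _)
  have hfac : (0:ℝ) ≤ K * tailT ξ n * ((n:ℝ)+1)^q := by positivity
  have hcollapse : ((n:ℝ)+1)^q * ((n:ℝ)+1)^(-q) = 1 := by
    rw [← Real.rpow_add hn1, show q + -q = 0 by ring, Real.rpow_zero]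
  have hfinal : tailT (amInf ξ) n ≤ (K/q) * tailT ξ n := by
    calc tailT (amInf ξ) n ≤ (K * tailT ξ n * ((n:ℝ)+1)^q) * (((n:ℝ)+1)^(-q)/q) :=
          hTle.trans (mul_le_mul_of_nonneg_left htsum hfac)
      _ = (K/q) * tailT ξ n * (((n:ℝ)+1)^q * ((n:ℝ)+1)^(-q)) := by
          field_simp
      _ = (K/q) * tailT ξ n := by rw [hcollapse, mul_one]
  rw [amInf_eq (amInf ξ) n, amInf_eq ξ n, div_le_iff₀ hn1]
  calc tailT (amInf ξ) n ≤ (K/q) * tailT ξ n := hfinal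
    _ = K/q * (tailT ξ n / ((n:ℝ)+1)) * ((n:ℝ)+1) := by field_simp
end

section
variable {ξ : ℕ → ℝ}

lemma amInf_antitone (h0 : ∀ n, 0 ≤ ξ n) (hsum : Summable ξ) : Antitone (amInf ξ) := by
  refine antitone_nat_of_succ_le fun n => ?_
  rw [amInf_eq, amInf_eq]
  have h1 : tailT ξ (n+1) ≤ tailT ξ n := tailT_antitone h0 hsum (by omega)
  have h2 := tailT_nonneg h0 (n+1)
  have e1 : ((n+1:ℕ):ℝ)+1 = (n:ℝ)+2 := by push_cast; ring
  rw [e1, div_le_div_iff₀ (by positivity) (by positivity)]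
  nlinarith

lemma bigO_to_T (h : BigO (amInf ξ) ξ) :
    ∃ C : ℝ, 0 < C ∧ ∀ n, tailT ξ n ≤ C * ((n:ℝ)+1) * ξ n := by
  obtain ⟨C, hC, hb⟩ := h
  refine ⟨C, hC, fun n => ?_⟩
  have h1 := hb n
  rw [amInf_eq, div_le_iff₀ (by positivity : (0:ℝ) < (n:ℝ)+1)] at h1
  calc tailT ξ n ≤ C * ξ n * ((n:ℝ)+1) := h1
    _ = C * ((n:ℝ)+1) * ξ n := by ring

lemma T_to_bigO {C : ℝ} (hC : 0 < C) (h : ∀ n, tailT ξ n ≤ C * ((n:ℝ)+1) * ξ n) :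
    BigO (amInf ξ) ξ := by
  refine ⟨C, hC, fun n => ?_⟩
  rw [amInf_eq, div_le_iff₀ (by positivity : (0:ℝ) < (n:ℝ)+1)]
  calc tailT ξ n ≤ C * ((n:ℝ)+1) * ξ n := h n
    _ = C * ξ n * ((n:ℝ)+1) := by ring
end

theorem stmt_5 (ξ : ℕ → ℝ) (hξ : IsC0Star ξ) (hsum : Summable ξ) :
    ((∃ m : ℕ, 0 < m ∧ BigO (amInf ξ) (fun n => ξ (n / m))) ↔ BigO (amInf ξ) ξ) ∧
    (BigO (amInf ξ) ξ ↔
      ∃ C : ℝ, 0 < C ∧ ∃ p : ℝ, 1 < p ∧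
        ∀ m n : ℕ, m ≤ n → ξ n ≤ C * ((m + 1 : ℝ) / (n + 1)) ^ p * ξ m) ∧
    (BigO (amInf ξ) ξ ↔ (Summable (amInf ξ) ∧ BigO (amInf (amInf ξ)) (amInf ξ))) := by
  obtain ⟨h0, hstep, -⟩ := hξ
  have hmono : Antitone ξ := antitone_nat_of_succ_le hstep
  refine ⟨⟨?_, ?_⟩, ⟨?_, ?_⟩, ⟨?_, ?_⟩⟩
  · -- (i) → (ii)
    rintro ⟨m, hm, C, hC, hi⟩
    refine T_to_bigO (C := C*((m:ℝ)+1)+m) (by positivity) fun n => ?_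
    set N := m*(n+1) with hNdef
    have hnN : n ≤ N := le_trans (by omega) (Nat.le_mul_of_pos_left (n+1) hm)
    have hdivN : N / m = n + 1 := Nat.mul_div_cancel_left (n+1) hm
    have hm1 : (1:ℝ) ≤ (m:ℝ) := by exact_mod_cast hm
    have hTN : tailT ξ N ≤ C * ((N:ℝ)+1) * ξ (n+1) := by
      have h1 := hi N
      simp only [hdivN] at h1
      rw [amInf_eq, div_le_iff₀ (by positivity : (0:ℝ) < (N:ℝ)+1)] at h1
      calc tailT ξ N ≤ C * ξ (n+1) * ((N:ℝ)+1) := h1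
        _ = C * ((N:ℝ)+1) * ξ (n+1) := by ring
    have hsub := tailT_sub hsum hnN
    have hblock := block_upper hmono hnN
    have hNc : (N:ℝ) = (m:ℝ)*((n:ℝ)+1) := by rw [hNdef]; push_cast; ring
    have hξ1 : ξ (n+1) ≤ ξ n := hstep n
    have hξ1n : 0 ≤ ξ (n+1) := h0 (n+1)
    have hξn : 0 ≤ ξ n := h0 n
    rw [hNc] at hTN hblock
    have c2 : tailT ξ n ≤ (C*((m:ℝ)*((n:ℝ)+1)+1) + ((m:ℝ)*((n:ℝ)+1)-(n:ℝ))) * ξ (n+1) := by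
      have : (C*((m:ℝ)*((n:ℝ)+1)+1) + ((m:ℝ)*((n:ℝ)+1)-(n:ℝ))) * ξ (n+1)
          = C*((m:ℝ)*((n:ℝ)+1)+1)*ξ (n+1) + ((m:ℝ)*((n:ℝ)+1)-(n:ℝ))*ξ (n+1) := by ring
      linarith [hsub, hTN, hblock]
    have c1 : C*((m:ℝ)*((n:ℝ)+1)+1) + ((m:ℝ)*((n:ℝ)+1) - (n:ℝ)) ≤ (C*((m:ℝ)+1)+(m:ℝ)) * ((n:ℝ)+1) := by
      nlinarith [mul_nonneg hC.le (Nat.cast_nonneg (α := ℝ) n), Nat.cast_nonneg (α := ℝ) n]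
    calc tailT ξ n ≤ (C*((m:ℝ)*((n:ℝ)+1)+1) + ((m:ℝ)*((n:ℝ)+1)-(n:ℝ))) * ξ (n+1) := c2
      _ ≤ ((C*((m:ℝ)+1)+(m:ℝ)) * ((n:ℝ)+1)) * ξ (n+1) := mul_le_mul_of_nonneg_right c1 hξ1n
      _ ≤ ((C*((m:ℝ)+1)+(m:ℝ)) * ((n:ℝ)+1)) * ξ n := by
          apply mul_le_mul_of_nonneg_left hξ1
          positivity
      _ = (C*((m:ℝ)+1)+(m:ℝ)) * ((n:ℝ)+1) * ξ n := by ring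
  · -- (ii) → (i)
    rintro ⟨C, hC, hb⟩
    exact ⟨1, one_pos, C, hC, fun n => by simpa using hb n⟩
  · -- (ii) → (iii)
    intro hii
    obtain ⟨C, hC, hT⟩ := bigO_to_T hii
    obtain ⟨C', p, hC', hp, h3⟩ := toIII h0 hmono hsum hC hT
    exact ⟨C', hC', p, hp, h3⟩
  · -- (iii) → (ii)
    rintro ⟨C, hC, p, hp, h3⟩
    exact T_to_bigO (C := C/(p-1)) (div_pos hC (by linarith)) (IIIto h0 hsum hC hp h3)
  · -- (ii) → (iv)
    intro hii
    obtain ⟨C, hC, hT⟩ := bigO_to_T hii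
    obtain ⟨C₀, hC₀, hb⟩ := hii
    have hηsum : Summable (amInf ξ) :=
      Summable.of_nonneg_of_le (amInf_nonneg h0) hb (hsum.mul_left C₀)
    obtain ⟨C', hC', h4⟩ := to_iv h0 hmono hsum hC hT hηsum
    exact ⟨hηsum, C', hC', h4⟩
  · -- (iv) → (ii)
    rintro ⟨hηsum, C₀, hC₀, hiv⟩
    set η := amInf ξ with hηdef
    have hη0 : ∀ n, 0 ≤ η n := amInf_nonneg h0
    have hηmono : Antitone η := amInf_antitone h0 hsum
    have hηT : ∀ n, tailT η n ≤ C₀ * ((n:ℝ)+1) * η n :=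
      fun n => by
        have h1 := hiv n
        rw [amInf_eq η n, div_le_iff₀ (by positivity : (0:ℝ) < (n:ℝ)+1)] at h1
        calc tailT η n ≤ C₀ * η n * ((n:ℝ)+1) := h1
          _ = C₀ * ((n:ℝ)+1) * η n := by ring
    obtain ⟨C₃, p, hC₃, hp, hIII⟩ := toIII hη0 hηmono hηsum hC₀ hηT
    set s := p - 1 with hsdef
    have hs : 0 < s := by simp only [hsdef]; linarith
    obtain ⟨L₀, hL₀⟩ := exists_nat_ge ((2*C₃)^(s⁻¹))
    set L := L₀ + 1 with hLdef
    have hL1 : 1 ≤ L := by omega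
    have hLr : (2*C₃)^(s⁻¹) ≤ (L:ℝ) := by
      refine hL₀.trans ?_
      exact_mod_cast Nat.le_succ L₀
    have hLpos : (0:ℝ) < (L:ℝ) := by
      have := Real.rpow_pos_of_pos (show (0:ℝ) < 2*C₃ by positivity) (s⁻¹)
      linarith
    have hpow : C₃ * ((1:ℝ)/L)^s ≤ 1/2 := by
      have h1 : ((2*C₃)^(s⁻¹))^s = (2*C₃ : ℝ) := by
        rw [← Real.rpow_mul (by positivity), inv_mul_cancel₀ hs.ne', Real.rpow_one]
      have h2 : (2*C₃:ℝ) ≤ (L:ℝ)^s := by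
        rw [← h1]
        exact Real.rpow_le_rpow (by positivity) hLr hs.le
      have h3 : ((1:ℝ)/L)^s = ((L:ℝ)^s)⁻¹ := by
        rw [one_div, Real.inv_rpow hLpos.le]
      rw [h3]
      have h4 : ((L:ℝ)^s)⁻¹ ≤ (2*C₃)⁻¹ := inv_anti₀ (by positivity) h2
      calc C₃ * ((L:ℝ)^s)⁻¹ ≤ C₃ * (2*C₃)⁻¹ := mul_le_mul_of_nonneg_left h4 hC₃.le
        _ = 1/2 := by field_simp
    refine T_to_bigO (C := 2*L) (by positivity) fun n => ?_
    set N := L*(n+1) with hNdef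
    have hnN : n ≤ N := le_trans (by omega) (Nat.le_mul_of_pos_left (n+1) (by omega))
    have hNc : (N:ℝ) = (L:ℝ)*((n:ℝ)+1) := by rw [hNdef]; push_cast; ring
    have hn1 : (0:ℝ) < (n:ℝ)+1 := by positivity
    have hN1 : (0:ℝ) < (N:ℝ)+1 := by positivity
    have hratio : ((n:ℝ)+1)/((N:ℝ)+1) ≤ 1/L := by
      rw [div_le_div_iff₀ hN1 hLpos, hNc]
      nlinarith
    have hTn0 := tailT_nonneg h0 n
    have hTN : tailT ξ N ≤ (1/2) * tailT ξ n := by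
      have h1 := hIII n N hnN
      set rat := ((n:ℝ)+1)/((N:ℝ)+1) with hratdef
      have hrat0 : 0 < rat := by positivity
      have hratp : rat^s * rat = rat^p := by
        nth_rewrite 2 [← Real.rpow_one rat]
        rw [← Real.rpow_add hrat0]
        congr 1
        simp only [hsdef]
        ring
      have hTNeq : tailT ξ N = η N * ((N:ℝ)+1) := by
        rw [hηdef, amInf_eq]; field_simp
      have hTneq : tailT ξ n = η n * ((n:ℝ)+1) := by
        rw [hηdef, amInf_eq]; field_simp
      have hrats : rat^s ≤ ((1:ℝ)/L)^s :=
        Real.rpow_le_rpow hrat0.le hratio hs.le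
      have hratN : rat * ((N:ℝ)+1) = (n:ℝ)+1 := by
        rw [hratdef]; field_simp
      have hηn0 := hη0 n
      have hratsnn : 0 ≤ rat^s := (Real.rpow_pos_of_pos hrat0 s).le
      calc tailT ξ N = η N * ((N:ℝ)+1) := hTNeq
        _ ≤ (C₃ * rat^p * η n) * ((N:ℝ)+1) := mul_le_mul_of_nonneg_right h1 hN1.le
        _ = (C₃ * rat^s) * (η n * (rat * ((N:ℝ)+1))) := by rw [← hratp]; ring
        _ = (C₃ * rat^s) * tailT ξ n := by rw [hratN, ← hTneq]
        _ ≤ (C₃ * ((1:ℝ)/L)^s) * tailT ξ n := by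
            apply mul_le_mul_of_nonneg_right _ hTn0
            exact mul_le_mul_of_nonneg_left hrats hC₃.le
        _ ≤ (1/2) * tailT ξ n := mul_le_mul_of_nonneg_right hpow hTn0
    have hsub := tailT_sub hsum hnN
    have hblock := block_upper hmono hnN
    have hξ1 : ξ (n+1) ≤ ξ n := hstep n
    have hξ1n : 0 ≤ ξ (n+1) := h0 (n+1)
    have hξn : 0 ≤ ξ n := h0 n
    rw [hNc] at hblock
    have hb1 : (L:ℝ)*((n:ℝ)+1) - (n:ℝ) ≤ (L:ℝ)*((n:ℝ)+1) := by
      have := Nat.cast_nonneg (α := ℝ) n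
      linarith
    have hLn : ((L:ℝ)*((n:ℝ)+1) - (n:ℝ)) * ξ (n+1) ≤ ((L:ℝ)*((n:ℝ)+1))*ξ n := by
      apply mul_le_mul hb1 hξ1 hξ1n (by positivity)
    have c2 : tailT ξ n ≤ (1/2)*tailT ξ n + ((L:ℝ)*((n:ℝ)+1) - (n:ℝ))*ξ (n+1) := by
      linarith [hsub, hTN, hblock]
    have : tailT ξ n ≤ 2*((L:ℝ)*((n:ℝ)+1))*ξ n := by linarith
    calc tailT ξ n ≤ 2*((L:ℝ)*((n:ℝ)+1))*ξ n := this
      _ = 2*(L:ℝ)*((n:ℝ)+1)*ξ n := by ring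
end

section
/- (i) Let 0 < p < 1, let ξ be the sequence ξ_n = n^{−p}, and let p' := p/(1 − p) (so that 1/p − 1/p' = 1). Then ξ̂ ≍ ⟨n^{−p'}⟩, i.e., there exist constants c, C > 0 with c·n^{−p'} ≤ ξ̂_n ≤ C·n^{−p'} for all n. (ii) For the harmonic sequence ω, ω_n = 1/n, one has ω̂ ≍ ⟨n·e^{−n}⟩, i.e., there exist c, C > 0 with c·n·e^{−n} ≤ ω̂_n ≤ C·n·e^{−n} for all n. -/
/-- `nuIdx ξ n` is (the 0-based version of) `ν(ξ)_{n+1} := min{k ≥ 1 : ∑_{i=1}^k ξ_i ≥ (n+1)ξ₁}`. -/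
noncomputable def nuIdx (ξ : ℕ → ℝ) (n : ℕ) : ℕ :=
  sInf {k : ℕ | (n + 1 : ℝ) * ξ 0 ≤ ∑ i ∈ Finset.range (k + 1), ξ i}

/-- `ξ̂_n := (ξ_a)_{ν(ξ)_n}` (0-based indexing). -/
noncomputable def hatSeq (ξ : ℕ → ℝ) (n : ℕ) : ℝ := am ξ (nuIdx ξ n)

open Finset Real

lemma nuIdx_spec (ξ : ℕ → ℝ) (hξ0 : ξ 0 = 1) (n : ℕ)
    (hne : ∃ k, (n + 1 : ℝ) ≤ ∑ i ∈ Finset.range (k + 1), ξ i) :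
    ((n + 1 : ℝ) ≤ ∑ i ∈ Finset.range (nuIdx ξ n + 1), ξ i) ∧
    (∀ m < nuIdx ξ n, ∑ i ∈ Finset.range (m + 1), ξ i < n + 1) := by
  have hset : {k : ℕ | (n + 1 : ℝ) * ξ 0 ≤ ∑ i ∈ Finset.range (k + 1), ξ i} =
      {k : ℕ | (n + 1 : ℝ) ≤ ∑ i ∈ Finset.range (k + 1), ξ i} := by
    simp [hξ0]
  constructor
  · obtain ⟨k, hk⟩ := hne
    have hmem : (nuIdx ξ n) ∈
        {k : ℕ | (n + 1 : ℝ) * ξ 0 ≤ ∑ i ∈ Finset.range (k + 1), ξ i} := by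
      apply Nat.sInf_mem
      exact ⟨k, by simpa [hξ0] using hk⟩
    simpa [hξ0] using hmem
  · intro m hm
    by_contra h
    push_neg at h
    have hmem : m ∈ {k : ℕ | (n + 1 : ℝ) * ξ 0 ≤ ∑ i ∈ Finset.range (k + 1), ξ i} := by
      simpa [hξ0] using h
    exact absurd (Nat.sInf_le hmem) (not_le.mpr hm)

lemma sum_nu_le (ξ : ℕ → ℝ) (hξ0 : ξ 0 = 1) (hle : ∀ i, ξ i ≤ 1) (n : ℕ)
    (hne : ∃ k, (n + 1 : ℝ) ≤ ∑ i ∈ Finset.range (k + 1), ξ i) :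
    ∑ i ∈ Finset.range (nuIdx ξ n + 1), ξ i ≤ n + 2 := by
  rcases Nat.eq_zero_or_pos (nuIdx ξ n) with h0 | hpos
  · rw [h0]
    rw [Finset.sum_range_one, hξ0]
    have : (0:ℝ) ≤ n := Nat.cast_nonneg n
    linarith
  · have hlt := (nuIdx_spec ξ hξ0 n hne).2 (nuIdx ξ n - 1) (by omega)
    rw [Finset.sum_range_succ]
    have : nuIdx ξ n - 1 + 1 = nuIdx ξ n := by omega
    rw [this] at hlt
    have := hle (nuIdx ξ n)
    linarith

lemma hatSeq_eq (ξ : ℕ → ℝ) (n : ℕ) :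
    hatSeq ξ n = (∑ i ∈ Finset.range (nuIdx ξ n + 1), ξ i) / ((nuIdx ξ n : ℝ) + 1) := rfl

/- power sums -/
lemma pow_sum_lower {p : ℝ} (hp0 : 0 < p) (hp1 : p < 1) (m : ℕ) :
    (m : ℝ) ^ (1 - p) ≤ ∑ i ∈ range m, ((i : ℝ) + 1) ^ (-p) := by
  rcases Nat.eq_zero_or_pos m with rfl | hm
  · simp [Real.zero_rpow (by linarith : (1:ℝ) - p ≠ 0)]
  have hm' : (0:ℝ) < m := by exact_mod_cast hm
  have h : ∀ i ∈ range m, (m:ℝ) ^ (-p) ≤ ((i:ℝ) + 1) ^ (-p) := by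
    intro i hi
    apply Real.rpow_le_rpow_of_nonpos (by positivity) ?_ (by linarith)
    have : (i:ℝ) + 1 ≤ m := by exact_mod_cast Nat.succ_le_of_lt (mem_range.mp hi)
    exact this
  calc (m:ℝ) ^ (1 - p) = (m:ℝ) * (m:ℝ) ^ (-p) := by
        rw [show (1:ℝ) - p = 1 + (-p) by ring, Real.rpow_add hm', Real.rpow_one]
    _ = (range m).card • ((m:ℝ) ^ (-p)) := by simp [nsmul_eq_mul]
    _ ≤ ∑ i ∈ range m, ((i:ℝ) + 1) ^ (-p) := Finset.card_nsmul_le_sum _ _ _ h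

lemma pow_sum_upper {p : ℝ} (hp0 : 0 < p) (hp1 : p < 1) (m : ℕ) :
    ∑ i ∈ range m, ((i : ℝ) + 1) ^ (-p) ≤ (m : ℝ) ^ (1 - p) / (1 - p) := by
  induction m with
  | zero => simp [Real.zero_rpow (by linarith : (1:ℝ) - p ≠ 0)]
  | succ m ih =>
    rw [Finset.sum_range_succ]
    set a : ℝ := (m:ℝ) + 1 with ha_def
    have ha1 : 1 ≤ a := by simp [ha_def]
    have ha0 : (0:ℝ) < a := by linarith
    have key : (m:ℝ) ^ (1 - p) + (1 - p) * a ^ (-p) ≤ a ^ (1 - p) := by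
      have hb := rpow_one_add_le_one_add_mul_self (s := -(1/a)) (p := 1 - p)
        (by have : 1/a ≤ 1 := by rw [div_le_one ha0]; exact ha1
            linarith) (by linarith) (by linarith)
      have h1s : 1 + -(1/a) = (m:ℝ) / a := by field_simp [ha_def]; linarith
      rw [h1s] at hb
      have h1 : (m:ℝ) ^ (1 - p) = ((m:ℝ) / a) ^ (1 - p) * a ^ (1 - p) := by
        rw [Real.div_rpow (by positivity) ha0.le, div_mul_cancel₀]
        positivity
      have h2a : a ^ ((1 - p) - 1) = a ^ (1 - p) / a ^ (1:ℝ) := Real.rpow_sub ha0 (1-p) 1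
      have h2 : a ^ (-p) = a ^ (1 - p) / a := by
        rw [show (-p : ℝ) = (1 - p) - 1 by ring, h2a, Real.rpow_one]
      have h3 : (1 + (1 - p) * -(1/a)) * a ^ (1 - p) = a ^ (1 - p) - (1 - p) * a ^ (-p) := by
        rw [h2]; ring
      have h4 : (m:ℝ) ^ (1 - p) ≤ a ^ (1 - p) - (1 - p) * a ^ (-p) := by
        rw [h1, ← h3]
        exact mul_le_mul_of_nonneg_right hb (by positivity)
      linarith
    have hcast : ((m + 1 : ℕ) : ℝ) = a := by push_cast [ha_def]; ring
    rw [hcast]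
    have h1p : (0:ℝ) < 1 - p := by linarith
    have heq : (m:ℝ) ^ (1 - p) / (1 - p) + a ^ (-p)
        = ((m:ℝ) ^ (1 - p) + (1 - p) * a ^ (-p)) / (1 - p) := by
      field_simp
    have h5 : (m:ℝ) ^ (1 - p) / (1 - p) + a ^ (-p) ≤ a ^ (1 - p) / (1 - p) := by
      rw [heq]; gcongr
    linarith [ih]

/- harmonic sums -/
lemma harm_sum_eq (m : ℕ) :
    ∑ i ∈ range m, 1 / ((i:ℝ) + 1) = ((harmonic m : ℚ) : ℝ) := by
  rw [harmonic]
  push_cast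
  simp [one_div]

lemma harm_lower (m : ℕ) : Real.log ((m:ℝ) + 1) ≤ ∑ i ∈ range m, 1 / ((i:ℝ) + 1) := by
  rw [harm_sum_eq]
  have := log_add_one_le_harmonic m
  push_cast at this ⊢
  linarith

lemma harm_upper (m : ℕ) : ∑ i ∈ range m, 1 / ((i:ℝ) + 1) ≤ 1 + Real.log m := by
  rw [harm_sum_eq]
  exact harmonic_le_one_add_log m

theorem stmt_7 :
    (∀ p : ℝ, 0 < p → p < 1 →
      ∃ c C : ℝ, 0 < c ∧ 0 < C ∧ ∀ n : ℕ,
        c * (n + 1 : ℝ) ^ (-(p / (1 - p))) ≤ hatSeq (fun k => (k + 1 : ℝ) ^ (-p)) n ∧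
        hatSeq (fun k => (k + 1 : ℝ) ^ (-p)) n ≤ C * (n + 1 : ℝ) ^ (-(p / (1 - p)))) ∧
    (∃ c C : ℝ, 0 < c ∧ 0 < C ∧ ∀ n : ℕ,
      c * ((n + 1 : ℝ) * Real.exp (-(n + 1 : ℝ))) ≤ hatSeq (fun k => 1 / (k + 1 : ℝ)) n ∧
      hatSeq (fun k => 1 / (k + 1 : ℝ)) n ≤ C * ((n + 1 : ℝ) * Real.exp (-(n + 1 : ℝ)))) := by
  constructor
  · -- power case
    intro p hp0 hp1
    have h1p : (0:ℝ) < 1 - p := by linarith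
    set q : ℝ := 1/(1-p) with hq
    have hq0 : 0 < q := by positivity
    have hq1 : (1 - p) * q = 1 := by rw [hq]; field_simp
    set ξ : ℕ → ℝ := fun k => (k + 1 : ℝ) ^ (-p) with hξ
    have hξ0 : ξ 0 = 1 := by simp [hξ]
    have hξle : ∀ i, ξ i ≤ 1 := fun i =>
      Real.rpow_le_one_of_one_le_of_nonpos
        (by have : (0:ℝ) ≤ i := Nat.cast_nonneg i; linarith) (by linarith)
    refine ⟨1/2, 2/(1-p)^q, by norm_num, by positivity, fun n => ?_⟩
    have hn0 : (0:ℝ) ≤ n := Nat.cast_nonneg n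
    have hne : ∃ k, (n + 1 : ℝ) ≤ ∑ i ∈ Finset.range (k + 1), ξ i := by
      obtain ⟨k, hk⟩ := exists_nat_ge (((n:ℝ)+1)^q)
      refine ⟨k, ?_⟩
      have h3 : (((n:ℝ)+1)^q)^(1-p) = (n:ℝ)+1 := by
        rw [← Real.rpow_mul (by positivity), show q*(1-p) = 1 by rw [mul_comm]; exact hq1,
          Real.rpow_one]
      have h2 : (((n:ℝ)+1)^q)^(1-p) ≤ ((k+1:ℕ):ℝ)^(1-p) :=
        Real.rpow_le_rpow (by positivity) (by push_cast; linarith) h1p.le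
      calc (n:ℝ)+1 = (((n:ℝ)+1)^q)^(1-p) := h3.symm
        _ ≤ ((k+1:ℕ):ℝ)^(1-p) := h2
        _ ≤ ∑ i ∈ Finset.range (k+1), ξ i := pow_sum_lower hp0 hp1 (k+1)
    obtain ⟨hlow, hmin⟩ := nuIdx_spec ξ hξ0 n hne
    have hhigh := sum_nu_le ξ hξ0 hξle n hne
    set ν := nuIdx ξ n with hν
    set N : ℝ := (ν:ℝ)+1 with hN
    have hN0 : (0:ℝ) < N := by positivity
    have hcast : ((ν+1:ℕ):ℝ) = N := by push_cast [hN]; ring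
    have hNlow : (1-p)^q * ((n:ℝ)+1)^q ≤ N := by
      have h1 : (n:ℝ)+1 ≤ N^(1-p)/(1-p) := by
        have := pow_sum_upper hp0 hp1 (ν+1)
        rw [hcast] at this
        linarith
      have h2 : (1-p)*((n:ℝ)+1) ≤ N^(1-p) := by
        rw [le_div_iff₀ h1p] at h1; linarith
      have h3 : ((1-p)*((n:ℝ)+1))^q ≤ (N^(1-p))^q :=
        Real.rpow_le_rpow (by positivity) h2 hq0.le
      rw [← Real.rpow_mul hN0.le, hq1, Real.rpow_one, Real.mul_rpow h1p.le (by positivity)]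
        at h3
      exact h3
    have hone : (1:ℝ) ≤ ((n:ℝ)+1)^q := by
      calc (1:ℝ) = (1:ℝ)^q := (Real.one_rpow q).symm
        _ ≤ ((n:ℝ)+1)^q := Real.rpow_le_rpow zero_le_one (by linarith) hq0.le
    have hNhigh : N ≤ 2*((n:ℝ)+1)^q := by
      rcases Nat.eq_zero_or_pos ν with h0 | hpos
      · rw [hN, h0]; push_cast; linarith
      · have hlt := hmin (ν-1) (by omega)
        have hrw : ν - 1 + 1 = ν := by omega
        rw [hrw] at hlt
        have h1 : (ν:ℝ)^(1-p) ≤ (n:ℝ)+1 :=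
          le_of_lt (lt_of_le_of_lt (pow_sum_lower hp0 hp1 ν) hlt)
        have h2 : ((ν:ℝ)^(1-p))^q ≤ ((n:ℝ)+1)^q :=
          Real.rpow_le_rpow (by positivity) h1 hq0.le
        rw [← Real.rpow_mul (Nat.cast_nonneg ν), hq1, Real.rpow_one] at h2
        rw [hN]; linarith
    have hexp : -(p/(1-p)) = 1 - q := by rw [hq]; field_simp; ring
    have hhat : hatSeq ξ n = (∑ i ∈ Finset.range (ν+1), ξ i)/N := hatSeq_eq ξ n
    have hSpos : (n:ℝ)+1 ≤ ∑ i ∈ Finset.range (ν+1), ξ i := hlow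
    constructor
    · have e1 : (1/2:ℝ)*((n:ℝ)+1)^(-(p/(1-p))) = ((n:ℝ)+1)/(2*((n:ℝ)+1)^q) := by
        rw [hexp, Real.rpow_sub (by positivity), Real.rpow_one]
        ring
      rw [hhat]
      calc (1/2:ℝ)*((n:ℝ)+1)^(-(p/(1-p))) = ((n:ℝ)+1)/(2*((n:ℝ)+1)^q) := e1
        _ ≤ (∑ i ∈ Finset.range (ν+1), ξ i)/N := by
            apply div_le_div₀ (by positivity) hSpos hN0 hNhigh
    · have e2 : (2/(1-p)^q)*((n:ℝ)+1)^(-(p/(1-p)))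
          = (2*((n:ℝ)+1))/((1-p)^q*((n:ℝ)+1)^q) := by
        rw [hexp, Real.rpow_sub (by positivity), Real.rpow_one]
        field_simp
      rw [hhat]
      have hden : (0:ℝ) < (1-p)^q*((n:ℝ)+1)^q := by positivity
      calc (∑ i ∈ Finset.range (ν+1), ξ i)/N ≤ (2*((n:ℝ)+1))/((1-p)^q*((n:ℝ)+1)^q) := by
            apply div_le_div₀ (by positivity) (by linarith) hden hNlow
        _ = (2/(1-p)^q)*((n:ℝ)+1)^(-(p/(1-p))) := e2.symm
  · -- harmonic case
    set ξ : ℕ → ℝ := fun k => 1 / (k + 1 : ℝ) with hξ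
    have hξ0 : ξ 0 = 1 := by simp [hξ]
    have hξle : ∀ i, ξ i ≤ 1 := by
      intro i
      rw [hξ]
      have : (1:ℝ) ≤ (i:ℝ)+1 := by have : (0:ℝ) ≤ i := Nat.cast_nonneg i; linarith
      simp only []
      rw [div_le_one (by linarith)]
      exact this
    refine ⟨1, 2*Real.exp 1, by norm_num, by positivity, fun n => ?_⟩
    have hn0 : (0:ℝ) ≤ n := Nat.cast_nonneg n
    have hne : ∃ k, (n + 1 : ℝ) ≤ ∑ i ∈ Finset.range (k + 1), ξ i := by
      obtain ⟨k, hk⟩ := exists_nat_ge (Real.exp ((n:ℝ)+1))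
      refine ⟨k, ?_⟩
      have h1 : Real.exp ((n:ℝ)+1) ≤ ((k+1:ℕ):ℝ)+1 := by push_cast; linarith
      have h2 : (n:ℝ)+1 ≤ Real.log (((k+1:ℕ):ℝ)+1) :=
        (Real.le_log_iff_exp_le (by positivity)).mpr h1
      calc (n:ℝ)+1 ≤ Real.log (((k+1:ℕ):ℝ)+1) := h2
        _ ≤ ∑ i ∈ Finset.range (k+1), ξ i := harm_lower (k+1)
    obtain ⟨hlow, hmin⟩ := nuIdx_spec ξ hξ0 n hne
    have hhigh := sum_nu_le ξ hξ0 hξle n hne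
    set ν := nuIdx ξ n with hν
    set N : ℝ := (ν:ℝ)+1 with hN
    have hN0 : (0:ℝ) < N := by positivity
    have hcast : ((ν+1:ℕ):ℝ) = N := by push_cast [hN]; ring
    have hNlow : Real.exp (n:ℝ) ≤ N := by
      have h1 : ∑ i ∈ Finset.range (ν+1), ξ i ≤ 1 + Real.log N := by
        have := harm_upper (ν+1)
        rwa [hcast] at this
      have h2 : (n:ℝ) ≤ Real.log N := by linarith
      exact (Real.le_log_iff_exp_le hN0).mp h2
    have hNhigh : N ≤ Real.exp ((n:ℝ)+1) := by
      rcases Nat.eq_zero_or_pos ν with h0 | hpos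
      · rw [hN, h0]
        push_cast
        have := Real.add_one_le_exp ((n:ℝ)+1)
        linarith
      · have hlt := hmin (ν-1) (by omega)
        have hrw : ν - 1 + 1 = ν := by omega
        rw [hrw] at hlt
        have h1 : Real.log N ≤ ∑ i ∈ Finset.range ν, ξ i := by
          have := harm_lower ν
          rwa [hN]
        have h2 : Real.log N < (n:ℝ)+1 := by linarith
        exact le_of_lt ((Real.log_lt_iff_lt_exp hN0).mp h2)
    have hhat : hatSeq ξ n = (∑ i ∈ Finset.range (ν+1), ξ i)/N := hatSeq_eq ξ n
    constructor
    · have e1 : (1:ℝ)*(((n:ℝ)+1)*Real.exp (-((n:ℝ)+1))) = ((n:ℝ)+1)/Real.exp ((n:ℝ)+1) := by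
        rw [Real.exp_neg]; ring
      rw [hhat, e1]
      apply div_le_div₀ (by positivity) hlow hN0 hNhigh
    · have e2 : (2*Real.exp 1)*(((n:ℝ)+1)*Real.exp (-((n:ℝ)+1)))
          = (2*((n:ℝ)+1))/Real.exp (n:ℝ) := by
        have hsplit : Real.exp ((n:ℝ)+1) = Real.exp (n:ℝ) * Real.exp 1 := by
          rw [← Real.exp_add]
        rw [Real.exp_neg, hsplit]
        field_simp
      rw [hhat]
      calc (∑ i ∈ Finset.range (ν+1), ξ i)/N ≤ (2*((n:ℝ)+1))/Real.exp (n:ℝ) := by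
            apply div_le_div₀ (by positivity) (by linarith) (Real.exp_pos _) hNlow
        _ = (2*Real.exp 1)*(((n:ℝ)+1)*Real.exp (-((n:ℝ)+1))) := e2.symm
end

section
/- Let ξ ∈ c₀* be nonsummable and suppose the principal ideals generated by ξ and by ξ̂ coincide, i.e., there exist m ∈ ℕ and C > 0 such that ξ̂_n ≤ C·ξ_{⌈n/m⌉} and ξ_n ≤ C·ξ̂_{⌈n/m⌉} for all n. Then (ξ) = (ξ)_a, i.e., there exist m' ∈ ℕ and C' > 0 with (ξ_a)_n ≤ C'·ξ_{⌈n/m'⌉} for all n (so ξ is regular). -/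
namespace Stmt8Aux

noncomputable def SP (ξ : ℕ → ℝ) (k : ℕ) : ℝ := ∑ j ∈ Finset.range k, ξ j

variable {ξ : ℕ → ℝ}

lemma sp_succ (k : ℕ) : SP ξ (k + 1) = SP ξ k + ξ k := Finset.sum_range_succ _ _

lemma sp_mono (hpos : ∀ n, 0 ≤ ξ n) : Monotone (SP ξ) := fun a b hab =>
  Finset.sum_le_sum_of_subset_of_nonneg (Finset.range_subset_range.mpr hab) fun i _ _ => hpos i

lemma sp_nonneg (hpos : ∀ n, 0 ≤ ξ n) (k : ℕ) : 0 ≤ SP ξ k :=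
  Finset.sum_nonneg fun i _ => hpos i

lemma xi0_le_sp (hpos : ∀ n, 0 ≤ ξ n) (k : ℕ) : ξ 0 ≤ SP ξ (k + 1) :=
  Finset.single_le_sum (fun i _ => hpos i) (Finset.mem_range.mpr (Nat.succ_pos k))

lemma anti (hanti : ∀ n, ξ (n + 1) ≤ ξ n) : Antitone ξ :=
  antitone_nat_of_succ_le hanti

lemma sp_le (hanti : ∀ n, ξ (n + 1) ≤ ξ n) (k : ℕ) : SP ξ k ≤ (k : ℝ) * ξ 0 := by
  have h := Finset.sum_le_card_nsmul (Finset.range k) ξ (ξ 0)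
    (fun i _ => anti hanti (Nat.zero_le i))
  simpa [SP, Finset.card_range, nsmul_eq_mul] using h

lemma chunk (hanti : ∀ n, ξ (n + 1) ≤ ξ n) {a b : ℕ} (hab : a ≤ b) :
    SP ξ b ≤ SP ξ a + ((b - a : ℕ) : ℝ) * ξ a := by
  have h1 : ∑ i ∈ Finset.Ico a b, ξ i = SP ξ b - SP ξ a := Finset.sum_Ico_eq_sub _ hab
  have h2 : ∑ i ∈ Finset.Ico a b, ξ i ≤ (Finset.Ico a b).card • ξ a :=
    Finset.sum_le_card_nsmul _ _ _ (fun i hi => anti hanti (Finset.mem_Ico.mp hi).1)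
  rw [Nat.card_Ico, nsmul_eq_mul] at h2
  linarith [h1 ▸ h2]

lemma xi_pos (hpos : ∀ n, 0 ≤ ξ n) (hanti : ∀ n, ξ (n + 1) ≤ ξ n)
    (hns : ¬ Summable ξ) (n : ℕ) : 0 < ξ n := by
  rcases (hpos n).lt_or_eq with h | h
  · exact h
  · exfalso
    apply hns
    apply summable_of_ne_finset_zero (s := Finset.range (n + 1))
    intro b hb
    have hnb : n ≤ b := by
      simp only [Finset.mem_range, not_lt] at hb; omega
    exact le_antisymm ((anti hanti hnb).trans h.symm.le) (hpos b)

lemma sp_tendsto (hpos : ∀ n, 0 ≤ ξ n) (hns : ¬ Summable ξ) :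
    Filter.Tendsto (fun k => SP ξ k) Filter.atTop Filter.atTop :=
  (not_summable_iff_tendsto_nat_atTop_of_nonneg hpos).mp hns

lemma nu_nonempty (hpos : ∀ n, 0 ≤ ξ n) (hns : ¬ Summable ξ) (q : ℕ) :
    {k : ℕ | ((q : ℝ) + 1) * ξ 0 ≤ ∑ i ∈ Finset.range (k + 1), ξ i}.Nonempty := by
  have h2 := (sp_tendsto hpos hns).eventually_ge_atTop (((q : ℝ) + 1) * ξ 0)
  rcases h2.exists with ⟨k, hk⟩
  exact ⟨k, le_trans hk (sp_mono hpos (Nat.le_succ k))⟩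

lemma nu_spec (hpos : ∀ n, 0 ≤ ξ n) (hns : ¬ Summable ξ) (q : ℕ) :
    ((q : ℝ) + 1) * ξ 0 ≤ SP ξ (nuIdx ξ q + 1) :=
  Nat.sInf_mem (nu_nonempty hpos hns q)

lemma nu_le (q k : ℕ) (h : ((q : ℝ) + 1) * ξ 0 ≤ SP ξ (k + 1)) : nuIdx ξ q ≤ k :=
  Nat.sInf_le h

lemma nu_min (q : ℕ) (h1 : 1 ≤ nuIdx ξ q) :
    SP ξ (nuIdx ξ q) < ((q : ℝ) + 1) * ξ 0 := by
  by_contra hcon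
  push_neg at hcon
  have h2 : nuIdx ξ q ≤ nuIdx ξ q - 1 := by
    apply Nat.sInf_le
    show ((q : ℝ) + 1) * ξ 0 ≤ ∑ i ∈ Finset.range (nuIdx ξ q - 1 + 1), ξ i
    rw [Nat.sub_add_cancel h1]
    exact hcon
  omega

lemma hat_eq (q : ℕ) :
    hatSeq ξ q = SP ξ (nuIdx ξ q + 1) / ((nuIdx ξ q : ℝ) + 1) := rfl

lemma am_eq (k : ℕ) : am ξ k = SP ξ (k + 1) / ((k : ℝ) + 1) := rfl

end Stmt8Aux

namespace Stmt8Aux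

variable {ξ : ℕ → ℝ}

lemma T1 (hpos : ∀ n, 0 ≤ ξ n) (hanti : ∀ n, ξ (n + 1) ≤ ξ n) {i n : ℕ}
    (hin : i ≤ n + 1) :
    SP ξ (n + 1) ≤ (i : ℝ) * ξ 0 + ((n : ℝ) + 1) * ξ i := by
  have h1 : SP ξ (n + 1) ≤ SP ξ i + ((n + 1 - i : ℕ) : ℝ) * ξ i := chunk hanti hin
  have h2 : SP ξ i ≤ (i : ℝ) * ξ 0 := sp_le hanti i
  have h3 : ((n + 1 - i : ℕ) : ℝ) ≤ (n : ℝ) + 1 := by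
    have : (n + 1 - i : ℕ) ≤ n + 1 := by omega
    exact_mod_cast this
  nlinarith [hpos i]

lemma FL (hpos : ∀ n, 0 ≤ ξ n) (hanti : ∀ n, ξ (n + 1) ≤ ξ n) (hns : ¬ Summable ξ)
    {m : ℕ} {C : ℝ} (hm : 0 < m) (hC : 0 < C)
    (hB : ∀ n, ξ n ≤ C * hatSeq ξ (n / m)) (b : ℕ) :
    ξ (m * ⌈32 * SP ξ (b + 1) / ξ 0⌉₊) ≤ 2 * C * ξ (b + 1) := by
  have hξ0pos : 0 < ξ 0 := xi_pos hpos hanti hns 0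
  set s := SP ξ (b + 1) with hsdef
  have hs0 : ξ 0 ≤ s := xi0_le_sp hpos b
  have hspos : 0 < s := lt_of_lt_of_le hξ0pos hs0
  set q := ⌈32 * s / ξ 0⌉₊ with hqdef
  have hq1 : 32 * s / ξ 0 ≤ (q : ℝ) := Nat.le_ceil _
  have hq2 : (q : ℝ) < 32 * s / ξ 0 + 1 := Nat.ceil_lt_add_one (by positivity)
  have hq1' : 32 * s ≤ (q : ℝ) * ξ 0 := by
    rw [div_le_iff₀ hξ0pos] at hq1; linarith
  have hq2' : (q : ℝ) * ξ 0 ≤ 32 * s + ξ 0 := by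
    have h := mul_le_mul_of_nonneg_right hq2.le hξ0pos.le
    rw [add_mul, one_mul, div_mul_cancel₀ _ hξ0pos.ne'] at h
    linarith
  set ν := nuIdx ξ q with hνdef
  have hmem : ((q : ℝ) + 1) * ξ 0 ≤ SP ξ (ν + 1) := nu_spec hpos hns q
  have hbν : b + 1 ≤ ν := by
    by_contra hcon
    push_neg at hcon
    have hle : SP ξ (ν + 1) ≤ s := sp_mono hpos (by omega)
    nlinarith
  have hmin : SP ξ ν < ((q : ℝ) + 1) * ξ 0 := nu_min q (by omega)
  have hup : SP ξ (ν + 1) ≤ SP ξ ν + ξ 0 := by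
    rw [sp_succ]
    have := anti hanti (Nat.zero_le ν)
    linarith
  have hchunk : SP ξ (ν + 1) ≤ SP ξ (b + 1) + ((ν + 1 - (b + 1) : ℕ) : ℝ) * ξ (b + 1) :=
    chunk hanti (by omega)
  have hcast : ((ν + 1 - (b + 1) : ℕ) : ℝ) = (ν : ℝ) - b := by
    have h : (b + 1) ≤ ν + 1 := by omega
    rw [show ν + 1 - (b + 1) = ν - b by omega]
    rw [Nat.cast_sub (by omega)]
  have hlow : 31 * s ≤ ((ν : ℝ) - b) * ξ (b + 1) := by
    rw [hcast] at hchunk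
    nlinarith
  have hBq := hB (m * q)
  rw [Nat.mul_div_cancel_left q hm, hat_eq, ← hνdef] at hBq
  have hξb1 : 0 < ξ (b + 1) := xi_pos hpos hanti hns (b + 1)
  have hbnn : (0:ℝ) ≤ (b:ℝ) := Nat.cast_nonneg b
  have h1 : SP ξ (ν + 1) ≤ 35 * s := by nlinarith
  have h2 : 31 * s ≤ ((ν : ℝ) + 1) * ξ (b + 1) := by nlinarith
  have hfin : SP ξ (ν + 1) / ((ν : ℝ) + 1) ≤ 2 * ξ (b + 1) := by
    rw [div_le_iff₀ (by positivity)]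
    nlinarith
  calc ξ (m * q) ≤ C * (SP ξ (ν + 1) / ((ν : ℝ) + 1)) := hBq
    _ ≤ C * (2 * ξ (b + 1)) := mul_le_mul_of_nonneg_left hfin hC.le
    _ = 2 * C * ξ (b + 1) := by ring

end Stmt8Aux

namespace Stmt8Aux

variable {ξ : ℕ → ℝ}

set_option maxHeartbeats 1600000 in
/-- The probe index coming from the FL lemma. -/
lemma exists_probe (hpos : ∀ n, 0 ≤ ξ n) (hanti : ∀ n, ξ (n + 1) ≤ ξ n)
    (hns : ¬ Summable ξ) {m : ℕ} {C : ℝ} (hm : 0 < m) (hCpos : 0 < C)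
    (hB : ∀ n, ξ n ≤ C * hatSeq ξ (n / m)) (b : ℕ) :
    ∃ i : ℕ, 32*(m:ℝ)*SP ξ (b+1) ≤ (i:ℝ)*ξ 0 ∧
      (i:ℝ)*ξ 0 ≤ 32*(m:ℝ)*SP ξ (b+1) + (m:ℝ)*ξ 0 ∧ ξ i ≤ 2*C*ξ (b+1) := by
  have hξ0pos : 0 < ξ 0 := xi_pos hpos hanti hns 0
  obtain ⟨q, hqdef⟩ : ∃ q, q = ⌈32 * SP ξ (b+1) / ξ 0⌉₊ := ⟨_, rfl⟩
  refine ⟨m * q, ?_, ?_, ?_⟩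
  · have hq1 : 32 * SP ξ (b+1) / ξ 0 ≤ (q : ℝ) := by rw [hqdef]; exact Nat.le_ceil _
    have hqa : 32 * SP ξ (b+1) ≤ (q:ℝ) * ξ 0 := by
      rw [div_le_iff₀ hξ0pos] at hq1; linarith
    have hic : ((m*q : ℕ):ℝ) = (m:ℝ)*(q:ℝ) := by push_cast; ring
    rw [hic]
    nlinarith [mul_le_mul_of_nonneg_left hqa (by positivity : (0:ℝ) ≤ (m:ℝ))]
  · have hsbpos : 0 < SP ξ (b+1) := lt_of_lt_of_le hξ0pos (xi0_le_sp hpos b)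
    have hq2 : (q : ℝ) < 32 * SP ξ (b+1) / ξ 0 + 1 := by
      rw [hqdef]; exact Nat.ceil_lt_add_one (by positivity)
    have hqb : (q:ℝ) * ξ 0 ≤ 32 * SP ξ (b+1) + ξ 0 := by
      have h := mul_le_mul_of_nonneg_right hq2.le hξ0pos.le
      rw [add_mul, one_mul, div_mul_cancel₀ _ hξ0pos.ne'] at h
      linarith
    have hic : ((m*q : ℕ):ℝ) = (m:ℝ)*(q:ℝ) := by push_cast; ring
    rw [hic]
    nlinarith [mul_le_mul_of_nonneg_left hqb (by positivity : (0:ℝ) ≤ (m:ℝ))]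
  · have h1 := FL hpos hanti hns hm hCpos hB b
    rw [← hqdef] at h1
    exact h1

section Cases

variable {m M : ℕ} {C c : ℝ} {b n : ℕ}

set_option maxHeartbeats 1600000 in
/-- Case D : scale `n` is dense. -/
lemma caseD (hpos : ∀ n, 0 ≤ ξ n) (hanti : ∀ n, ξ (n + 1) ≤ ξ n) (hns : ¬ Summable ξ)
    (hM0 : 0 < M) (hcpos : 0 < c) (hcM : c ≤ 1/((M:ℝ)+1))
    (hndef : n = M * (b+1)) (hD : (2*(b:ℝ)+2) * ξ 0 ≤ SP ξ (n+1)) :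
    c * am ξ n ≤ ξ b := by
  have hξ0pos : 0 < ξ 0 := xi_pos hpos hanti hns 0
  have hsple : ∀ k : ℕ, SP ξ k ≤ (k:ℝ) * ξ 0 := sp_le hanti
  have hsppos : ∀ k : ℕ, 0 < SP ξ (k+1) :=
    fun k => lt_of_lt_of_le hξ0pos (xi0_le_sp hpos k)
  have hampos : 0 < am ξ n := by
    rw [am_eq]; exact div_pos (hsppos n) (by positivity)
  have hamle : am ξ n ≤ ξ 0 := by
    rw [am_eq, div_le_iff₀ (by positivity)]
    have h1 := hsple (n+1)
    push_cast at h1 ⊢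
    linarith
  have hMpos : (0:ℝ) < (M:ℝ) := by exact_mod_cast hM0
  have hncast : (n:ℝ) = (M:ℝ) * ((b:ℝ)+1) := by rw [hndef]; push_cast; ring
  have hbpos : (0:ℝ) < (b:ℝ)+1 := by positivity
  obtain ⟨ν, hνdef⟩ : ∃ ν, ν = nuIdx ξ (2*b+1) := ⟨_, rfl⟩
  have hνle : ν ≤ n := by
    rw [hνdef]
    apply nu_le
    push_cast
    linarith
  have hspec : (((2*b+1:ℕ):ℝ)+1)*ξ 0 ≤ SP ξ (ν + 1) := by
    rw [hνdef]; exact nu_spec hpos hns _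
  push_cast at hspec
  have hνb : b ≤ ν := by
    by_contra hcon
    push_neg at hcon
    have h1 : SP ξ (ν+1) ≤ ((ν:ℝ)+1)*ξ 0 := by
      have := hsple (ν+1); push_cast at this ⊢; linarith
    have h2 : ((ν:ℝ)+1) ≤ (b:ℝ) := by exact_mod_cast hcon
    nlinarith
  have hchunk : SP ξ (ν+1) ≤ SP ξ b + ((ν+1-b : ℕ):ℝ) * ξ b := chunk hanti (by omega)
  have hcastd : ((ν+1-b:ℕ):ℝ) ≤ (n:ℝ)+1 := by
    have h3 : ν+1-b ≤ n+1 := by omega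
    exact_mod_cast h3
  have hSb : SP ξ b ≤ (b:ℝ)*ξ 0 := hsple b
  have hkey : ((b:ℝ)+2)*ξ 0 ≤ ((n:ℝ)+1) * ξ b := by
    nlinarith [mul_le_mul_of_nonneg_right hcastd (hpos b)]
  have h1 : c * am ξ n ≤ (1/((M:ℝ)+1)) * ξ 0 :=
    mul_le_mul hcM hamle hampos.le (by positivity)
  have h2 : ((n:ℝ)+1) ≤ ((M:ℝ)+1)*((b:ℝ)+2) := by
    rw [hncast]; nlinarith
  have h3 : ξ 0 ≤ ((M:ℝ)+1) * ξ b := by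
    nlinarith [mul_le_mul_of_nonneg_right h2 (hpos b)]
  calc c * am ξ n ≤ (1/((M:ℝ)+1)) * ξ 0 := h1
    _ ≤ ξ b := by
        rw [div_mul_eq_mul_div, one_mul, div_le_iff₀ (by positivity)]
        linarith

set_option maxHeartbeats 1600000 in
/-- Case S-G : strong growth between scales b and n. -/
lemma caseSG (hpos : ∀ n, 0 ≤ ξ n) (hanti : ∀ n, ξ (n + 1) ≤ ξ n) (hns : ¬ Summable ξ)
    (hm : 0 < m) (hCpos : 0 < C)
    (hB : ∀ n, ξ n ≤ C * hatSeq ξ (n / m))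
    (hcpos : 0 < c) (hcC : c ≤ 1/(4*C))
    (hndef : n = M * (b+1)) (hSG : 128*(m:ℝ)*SP ξ (b+1) ≤ SP ξ (n+1)) :
    c * am ξ n ≤ ξ b := by
  have hξ0pos : 0 < ξ 0 := xi_pos hpos hanti hns 0
  have hsple : ∀ k : ℕ, SP ξ k ≤ (k:ℝ) * ξ 0 := sp_le hanti
  have hsppos : ∀ k : ℕ, 0 < SP ξ (k+1) :=
    fun k => lt_of_lt_of_le hξ0pos (xi0_le_sp hpos k)
  have hsnpos : 0 < SP ξ (n+1) := hsppos n
  have hsb0 : ξ 0 ≤ SP ξ (b+1) := xi0_le_sp hpos b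
  have hnpos : (0:ℝ) < (n:ℝ)+1 := by positivity
  have hsn_le : SP ξ (n+1) ≤ ((n:ℝ)+1) * ξ 0 := by
    have h1 := hsple (n+1); push_cast at h1 ⊢; linarith
  obtain ⟨i, hia, hib, hFL'⟩ := exists_probe hpos hanti hns hm hCpos hB b
  have hFL : ξ i ≤ 2*C*ξ b := by
    have h2 : ξ (b+1) ≤ ξ b := hanti b
    nlinarith
  have hmsb : (m:ℝ)*ξ 0 ≤ (m:ℝ)*SP ξ (b+1) :=
    mul_le_mul_of_nonneg_left hsb0 (by positivity)
  have hiup : (i:ℝ) * ξ 0 ≤ SP ξ (n+1)/2 := by nlinarith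
  have hile : i ≤ n+1 := by
    have h2 : (i:ℝ) ≤ (n:ℝ)+1 := by nlinarith
    exact_mod_cast h2
  have hT1 := T1 hpos hanti (i := i) (n := n) hile
  have hxi_i : SP ξ (n+1) / 2 ≤ ((n:ℝ)+1) * ξ i := by linarith
  rw [am_eq, ← mul_div_assoc, div_le_iff₀ hnpos]
  have e1 : ((n:ℝ)+1) * ξ i ≤ ((n:ℝ)+1) * (2*C*ξ b) := mul_le_mul_of_nonneg_left hFL hnpos.le
  have e3 : c * SP ξ (n+1) ≤ (1/(4*C)) * SP ξ (n+1) := mul_le_mul_of_nonneg_right hcC hsnpos.le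
  have e4 : (1/(4*C)) * SP ξ (n+1) ≤ ξ b * ((n:ℝ)+1) := by
    rw [div_mul_eq_mul_div, one_mul, div_le_iff₀ (by positivity)]
    nlinarith
  linarith

set_option maxHeartbeats 1600000 in
/-- Case SPARSE. -/
lemma caseSPARSE (hpos : ∀ n, 0 ≤ ξ n) (hanti : ∀ n, ξ (n + 1) ≤ ξ n) (hns : ¬ Summable ξ)
    (hm : 0 < m) (hCpos : 0 < C) (hC1 : 1 ≤ C)
    (hB : ∀ n, ξ n ≤ C * hatSeq ξ (n / m))
    (hM2 : 2 ≤ M) (hMC : 2000 * C * (m:ℝ) ≤ (M:ℝ))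
    (hcpos : 0 < c)
    (hbigz : 100*(M*(m+2)) ≤ b)
    (ih : ∀ k, k < b → c * am ξ (M * (k+1)) ≤ ξ k)
    (hndef : n = M * (b+1))
    (hSG : SP ξ (n+1) ≤ 128*(m:ℝ)*SP ξ (b+1))
    (hSP : 32*(m:ℝ)*(M:ℝ)*SP ξ (b+1) ≤ ((b:ℝ)+1)*ξ 0) :
    c * am ξ n ≤ ξ b := by
  have hξ0pos : 0 < ξ 0 := xi_pos hpos hanti hns 0
  have hm1 : (1:ℝ) ≤ (m:ℝ) := by exact_mod_cast hm
  have hM0 : 0 < M := by omega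
  have hMpos : (0:ℝ) < (M:ℝ) := by exact_mod_cast hM0
  have hspmono : Monotone (SP ξ) := sp_mono hpos
  have hsppos : ∀ k : ℕ, 0 < SP ξ (k+1) :=
    fun k => lt_of_lt_of_le hξ0pos (xi0_le_sp hpos k)
  have hsbpos : 0 < SP ξ (b+1) := hsppos b
  have hsnpos : 0 < SP ξ (n+1) := hsppos n
  have hbpos : (0:ℝ) < (b:ℝ)+1 := by positivity
  have hnpos : (0:ℝ) < (n:ℝ)+1 := by positivity
  have hncast : (n:ℝ) = (M:ℝ) * ((b:ℝ)+1) := by rw [hndef]; push_cast; ring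
  have hblin : 200*m + 400 ≤ b := by
    have h1 : 2*(m+2) ≤ M*(m+2) := Nat.mul_le_mul_right _ hM2
    omega
  obtain ⟨i, hia, hib, hFL'⟩ := exists_probe hpos hanti hns hm hCpos hB b
  have hFL : ξ i ≤ 2*C*ξ b := by
    have h2 : ξ (b+1) ≤ ξ b := hanti b
    nlinarith
  obtain ⟨u, hudef⟩ : ∃ u, u = (b+1)/M := ⟨_, rfl⟩
  obtain ⟨j, hjdef⟩ : ∃ j, j = u + 2*m := ⟨_, rfl⟩
  obtain ⟨w, hwdef⟩ : ∃ w, w = M*u := ⟨_, rfl⟩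
  have hdivM : b + 1 < w + M := by
    have h0 : w = M*((b+1)/M) := by rw [hwdef, hudef]
    have h1 := Nat.div_add_mod (b+1) M
    have h2 := Nat.mod_lt (b+1) hM0
    omega
  have hwle : w ≤ b+1 := by
    have h0 : w = ((b+1)/M)*M := by rw [hwdef, hudef]; ring
    rw [h0]
    exact Nat.div_mul_le_self _ _
  have hule : u ≤ (b+1)/2 := by
    rw [hudef]
    exact Nat.div_le_div_left hM2 (by norm_num)
  have hjlt : j < b := by omega
  have hwcast : (w:ℝ) = (M:ℝ)*(u:ℝ) := by rw [hwdef]; push_cast; ring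
  have hjcastlb : ((b:ℝ)+1)/(M:ℝ) - 1 ≤ (u : ℝ) := by
    have h3 : ((b:ℝ)+1) < (w:ℝ) + (M:ℝ) := by exact_mod_cast hdivM
    rw [sub_le_iff_le_add, div_le_iff₀ hMpos]
    nlinarith
  have h5 : 32*(m:ℝ)*SP ξ (b+1) ≤ (((b:ℝ)+1)/(M:ℝ))*ξ 0 := by
    rw [div_mul_eq_mul_div, le_div_iff₀ hMpos]
    nlinarith
  have h4 : (i:ℝ) ≤ ((b:ℝ)+1)/(M:ℝ) + (m:ℝ) := by
    have h6 : (i:ℝ)*ξ 0 ≤ (((b:ℝ)+1)/(M:ℝ) + (m:ℝ))*ξ 0 := by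
      rw [add_mul]; linarith
    exact le_of_mul_le_mul_right h6 hξ0pos
  have hij : i ≤ j := by
    have h7 : (i:ℝ) ≤ (j:ℝ) := by
      have h6 : ((j:ℕ):ℝ) = (u:ℝ) + 2*(m:ℝ) := by rw [hjdef]; push_cast; ring
      rw [h6]; linarith
    exact_mod_cast h7
  have hξj : ξ j ≤ 2*C*ξ b := le_trans (anti hanti hij) hFL
  have hihj := ih j hjlt
  obtain ⟨K, hKdef2⟩ : ∃ K, K = M*(j+1) := ⟨_, rfl⟩
  rw [← hKdef2] at hihj
  obtain ⟨v, hvdef⟩ : ∃ v, v = M*(2*m+1) := ⟨_, rfl⟩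
  have hKexp : K = w + v := by rw [hKdef2, hjdef, hwdef, hvdef]; ring
  have hv2M : M*2 ≤ v := by rw [hvdef]; exact Nat.mul_le_mul_left M (by omega)
  have hKge : b+1 ≤ K := by omega
  have hvz : v ≤ 2*(M*(m+2)) := by
    rw [hvdef]
    calc M*(2*m+1) ≤ M*(2*(m+2)) := Nat.mul_le_mul_left M (by omega)
      _ = 2*(M*(m+2)) := by ring
  have hKle2 : (K:ℝ)+1 ≤ 2*((b:ℝ)+1) := by
    have h11 : K + 1 ≤ 2*(b+1) := by omega
    exact_mod_cast h11
  have hamK : SP ξ (b+1) / ((K:ℝ)+1) ≤ am ξ K := by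
    have h12 : SP ξ (b+1) ≤ SP ξ (K+1) := hspmono (by omega)
    rw [am_eq, div_le_div_iff₀ (by positivity) (by positivity)]
    nlinarith [mul_le_mul_of_nonneg_right h12 (by positivity : (0:ℝ) ≤ (K:ℝ)+1)]
  have hstep : c * (SP ξ (b+1)/(2*((b:ℝ)+1))) ≤ ξ j := by
    have s4 : SP ξ (b+1)/(2*((b:ℝ)+1)) ≤ SP ξ (b+1)/((K:ℝ)+1) := by
      rw [div_le_div_iff₀ (by positivity) (by positivity)]
      nlinarith [mul_le_mul_of_nonneg_left hKle2 hsbpos.le]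
    calc c * (SP ξ (b+1)/(2*((b:ℝ)+1))) ≤ c * (SP ξ (b+1)/((K:ℝ)+1)) :=
          mul_le_mul_of_nonneg_left s4 hcpos.le
      _ ≤ c * am ξ K := mul_le_mul_of_nonneg_left hamK hcpos.le
      _ ≤ ξ j := hihj
  have hcsb : c * SP ξ (b+1) ≤ 4*C*((b:ℝ)+1)*ξ b := by
    rw [← mul_div_assoc, div_le_iff₀ (by positivity)] at hstep
    nlinarith [mul_le_mul_of_nonneg_right hξj (by positivity : (0:ℝ) ≤ 2*((b:ℝ)+1))]
  rw [am_eq, ← mul_div_assoc, div_le_iff₀ hnpos]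
  have f1 : c * SP ξ (n+1) ≤ 128*(m:ℝ)*(c*SP ξ (b+1)) := by
    nlinarith [mul_le_mul_of_nonneg_left hSG hcpos.le]
  have f2 : 128*(m:ℝ)*(c*SP ξ (b+1)) ≤ 128*(m:ℝ)*(4*C*((b:ℝ)+1)*ξ b) :=
    mul_le_mul_of_nonneg_left hcsb (by positivity)
  have f3 : 512*C*(m:ℝ)*(((b:ℝ)+1)*ξ b) ≤ (M:ℝ)*(((b:ℝ)+1)*ξ b) := by
    apply mul_le_mul_of_nonneg_right _ (mul_nonneg hbpos.le (hpos b))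
    nlinarith
  have f4 : (M:ℝ)*(((b:ℝ)+1)*ξ b) ≤ ((n:ℝ)+1)*ξ b := by
    rw [hncast]; nlinarith [hpos b]
  nlinarith

set_option maxHeartbeats 4000000 in
/-- Case MID. -/
lemma caseMID (hpos : ∀ n, 0 ≤ ξ n) (hanti : ∀ n, ξ (n + 1) ≤ ξ n) (hns : ¬ Summable ξ)
    (hm : 0 < m) (hCpos : 0 < C) (hC1 : 1 ≤ C)
    (hB : ∀ n, ξ n ≤ C * hatSeq ξ (n / m))
    (hM2 : 2 ≤ M) (hMC : 2000 * C * (m:ℝ) ≤ (M:ℝ))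
    (hcpos : 0 < c)
    (hbigz : 100*(M*(m+2)) ≤ b)
    (ih : ∀ k, k < b → c * am ξ (M * (k+1)) ≤ ξ k)
    (hndef : n = M * (b+1))
    (hSG : SP ξ (n+1) ≤ 128*(m:ℝ)*SP ξ (b+1))
    (hSP : ((b:ℝ)+1)*ξ 0 < 32*(m:ℝ)*(M:ℝ)*SP ξ (b+1))
    (hMD : 32768*C*(m:ℝ)^2 * SP ξ (b+1) ≤ ((b:ℝ)+1)*ξ 0) :
    c * am ξ n ≤ ξ b := by
  have hξ0pos : 0 < ξ 0 := xi_pos hpos hanti hns 0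
  have hm1 : (1:ℝ) ≤ (m:ℝ) := by exact_mod_cast hm
  have hM0 : 0 < M := by omega
  have hMpos : (0:ℝ) < (M:ℝ) := by exact_mod_cast hM0
  have hM1 : (1:ℝ) ≤ (M:ℝ) := by exact_mod_cast hM0
  have hspmono : Monotone (SP ξ) := sp_mono hpos
  have hsppos : ∀ k : ℕ, 0 < SP ξ (k+1) :=
    fun k => lt_of_lt_of_le hξ0pos (xi0_le_sp hpos k)
  have hsbpos : 0 < SP ξ (b+1) := hsppos b
  have hsb0 : ξ 0 ≤ SP ξ (b+1) := xi0_le_sp hpos b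
  have hsnpos : 0 < SP ξ (n+1) := hsppos n
  have hbpos : (0:ℝ) < (b:ℝ)+1 := by positivity
  have hnpos : (0:ℝ) < (n:ℝ)+1 := by positivity
  have hncast : (n:ℝ) = (M:ℝ) * ((b:ℝ)+1) := by rw [hndef]; push_cast; ring
  have hblin : 200*m + 400 ≤ b := by
    have h1 : 2*(m+2) ≤ M*(m+2) := Nat.mul_le_mul_right _ hM2
    omega
  have hblinR : 200*(m:ℝ) + 400 ≤ (b:ℝ) := by exact_mod_cast hblin
  obtain ⟨i, hia, hib, hFL'⟩ := exists_probe hpos hanti hns hm hCpos hB b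
  have hFL : ξ i ≤ 2*C*ξ b := by
    have h2 : ξ (b+1) ≤ ξ b := hanti b
    nlinarith
  have hilt : i < b := by
    have h2 : (i:ℝ)*(1024*C*(m:ℝ)) ≤ ((b:ℝ)+1) + 1024*C*(m:ℝ)^2 := by
      have h3 : ((i:ℝ)*(1024*C*(m:ℝ)))*ξ 0 ≤ (((b:ℝ)+1) + 1024*C*(m:ℝ)^2)*ξ 0 := by
        nlinarith [mul_le_mul_of_nonneg_right hib
          (by positivity : (0:ℝ) ≤ 1024*C*(m:ℝ))]
      exact le_of_mul_le_mul_right h3 hξ0pos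
    have hCm1 : 1 ≤ C*(m:ℝ) := by nlinarith
    have hbC : 200000*C*(m:ℝ)^2 ≤ (b:ℝ) := by
      have h1 : (100:ℝ)*((M:ℝ)*((m:ℝ)+2)) ≤ (b:ℝ) := by
        have h1' : (100*(M*(m+2)) : ℕ) ≤ b := hbigz
        exact_mod_cast h1'
      nlinarith [mul_le_mul_of_nonneg_right hMC (by positivity : (0:ℝ) ≤ (m:ℝ)+2)]
    have h4 : (i:ℝ) < (b:ℝ) := by
      nlinarith [Nat.cast_nonneg i (α := ℝ)]
    exact_mod_cast h4
  obtain ⟨K, hKdefm⟩ : ∃ K, K = M*(i+1) := ⟨_, rfl⟩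
  have hihi := ih i hilt
  rw [← hKdefm] at hihi
  have hKcast : (K:ℝ) = (M:ℝ)*((i:ℝ)+1) := by rw [hKdefm]; push_cast; ring
  have hKb : ((b:ℝ)+1) < (K:ℝ) := by
    have h1 : 32*(m:ℝ)*(M:ℝ)*SP ξ (b+1) ≤ (M:ℝ)*((i:ℝ)*ξ 0) := by
      nlinarith [mul_le_mul_of_nonneg_left hia hMpos.le]
    have h2 : ((b:ℝ)+1)*ξ 0 < (K:ℝ)*ξ 0 := by
      rw [hKcast]; nlinarith
    exact lt_of_mul_lt_mul_right h2 hξ0pos.le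
  have hKge : b+1 ≤ K := by
    have h4 : ((b+1:ℕ):ℝ) < (K:ℝ) := by push_cast; linarith
    exact_mod_cast h4.le
  have hKup : ((K:ℝ)+1)*ξ 0 ≤ 64*(m:ℝ)*(M:ℝ)*SP ξ (b+1) := by
    have h5 : (M:ℝ)*((i:ℝ)*ξ 0) ≤ (M:ℝ)*(32*(m:ℝ)*SP ξ (b+1) + (m:ℝ)*ξ 0) :=
      mul_le_mul_of_nonneg_left hib hMpos.le
    have h6 : (m:ℝ)*(M:ℝ)*ξ 0 ≤ (m:ℝ)*(M:ℝ)*SP ξ (b+1) :=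
      mul_le_mul_of_nonneg_left hsb0 (by positivity)
    have h7 : (M:ℝ)*ξ 0 ≤ (m:ℝ)*((M:ℝ)*ξ 0) := le_mul_of_one_le_left (by positivity) hm1
    have h8 : ξ 0 ≤ (M:ℝ)*ξ 0 := le_mul_of_one_le_left hξ0pos.le hM1
    have h10 : (0:ℝ) ≤ (m:ℝ)*(M:ℝ)*SP ξ (b+1) := by positivity
    rw [hKcast]
    nlinarith [h5, h6, h7, h8, h10]
  have hamK2 : SP ξ (b+1) / ((K:ℝ)+1) ≤ am ξ K := by
    have h12 : SP ξ (b+1) ≤ SP ξ (K+1) := hspmono (by omega)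
    rw [am_eq, div_le_div_iff₀ (by positivity) (by positivity)]
    nlinarith [mul_le_mul_of_nonneg_right h12 (by positivity : (0:ℝ) ≤ (K:ℝ)+1)]
  have t1 : c * SP ξ (b+1) ≤ ξ i * ((K:ℝ)+1) := by
    have s3 : c * (SP ξ (b+1)/((K:ℝ)+1)) ≤ ξ i :=
      le_trans (mul_le_mul_of_nonneg_left hamK2 hcpos.le) hihi
    rw [← mul_div_assoc, div_le_iff₀ (by positivity)] at s3
    exact s3
  have t4 : c * ξ 0 ≤ 64*(m:ℝ)*(M:ℝ)*ξ i := by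
    have t2 : (c * SP ξ (b+1)) * ξ 0 ≤ (ξ i * ((K:ℝ)+1)) * ξ 0 :=
      mul_le_mul_of_nonneg_right t1 hξ0pos.le
    have t3 : ξ i * (((K:ℝ)+1) * ξ 0) ≤ ξ i * (64*(m:ℝ)*(M:ℝ)*SP ξ (b+1)) :=
      mul_le_mul_of_nonneg_left hKup (hpos i)
    have t5 : (c*ξ 0)*SP ξ (b+1) ≤ (64*(m:ℝ)*(M:ℝ)*ξ i)*SP ξ (b+1) := by nlinarith
    exact le_of_mul_le_mul_right t5 hsbpos
  rw [am_eq, ← mul_div_assoc, div_le_iff₀ hnpos]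
  have v1 : c * SP ξ (n+1) ≤ 128*(m:ℝ)*(c*SP ξ (b+1)) := by
    nlinarith [mul_le_mul_of_nonneg_left hSG hcpos.le]
  have v2 : (c*SP ξ (b+1))*(32768*C*(m:ℝ)^2) ≤ ((b:ℝ)+1)*(c*ξ 0) := by
    nlinarith [mul_le_mul_of_nonneg_left hMD hcpos.le]
  have v3 : ((b:ℝ)+1)*(c*ξ 0) ≤ ((b:ℝ)+1)*(64*(m:ℝ)*(M:ℝ)*ξ i) :=
    mul_le_mul_of_nonneg_left t4 hbpos.le
  have v4 : 8192*(m:ℝ)^2*(M:ℝ)*((b:ℝ)+1)*ξ i ≤ 8192*(m:ℝ)^2*(M:ℝ)*((b:ℝ)+1)*(2*C*ξ b) := by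
    apply mul_le_mul_of_nonneg_left hFL (by positivity)
  have v5 : (M:ℝ)*((b:ℝ)+1) ≤ (n:ℝ)+1 := by rw [hncast]; linarith
  have wfin : (c * SP ξ (n+1))*(32768*C*(m:ℝ)^2) ≤ (ξ b * ((n:ℝ)+1))*(32768*C*(m:ℝ)^2) := by
    have w1 : (c * SP ξ (n+1))*(32768*C*(m:ℝ)^2) ≤
        (128*(m:ℝ))*((c*SP ξ (b+1))*(32768*C*(m:ℝ)^2)) := by
      nlinarith [mul_le_mul_of_nonneg_right v1 (by positivity : (0:ℝ) ≤ 32768*C*(m:ℝ)^2)]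
    have w2 : (128*(m:ℝ))*((c*SP ξ (b+1))*(32768*C*(m:ℝ)^2)) ≤
        (128*(m:ℝ))*(((b:ℝ)+1)*(c*ξ 0)) :=
      mul_le_mul_of_nonneg_left v2 (by positivity)
    have w3 : (128*(m:ℝ))*(((b:ℝ)+1)*(c*ξ 0)) ≤
        (128*(m:ℝ))*(((b:ℝ)+1)*(64*(m:ℝ)*(M:ℝ)*ξ i)) :=
      mul_le_mul_of_nonneg_left v3 (by positivity)
    have w5 : 16384*C*(m:ℝ)^2*((M:ℝ)*((b:ℝ)+1))*ξ b ≤ 16384*C*(m:ℝ)^2*((n:ℝ)+1)*ξ b := by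
      apply mul_le_mul_of_nonneg_right _ (hpos b)
      nlinarith [mul_le_mul_of_nonneg_left v5 (by positivity : (0:ℝ) ≤ 16384*C*(m:ℝ)^2)]
    have hnn : (0:ℝ) ≤ C*(m:ℝ)^2*((n:ℝ)+1)*ξ b := by
      have := hpos b
      positivity
    linarith [w1, w2, w3, v4, w5, hnn]
  exact le_of_mul_le_mul_right wfin (by positivity)

end Cases

set_option maxHeartbeats 1600000 in
/-- The inductive step. -/
lemma mainstep (hpos : ∀ n, 0 ≤ ξ n) (hanti : ∀ n, ξ (n + 1) ≤ ξ n)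
    (hns : ¬ Summable ξ) {m M : ℕ} {C : ℝ} (hm : 0 < m) (hCpos : 0 < C) (hC1 : 1 ≤ C)
    (hB : ∀ n, ξ n ≤ C * hatSeq ξ (n / m))
    (hM2 : 2 ≤ M) (hMC : 2000 * C * (m:ℝ) ≤ (M:ℝ))
    {c : ℝ} (hcpos : 0 < c) (hcM : c ≤ 1/((M:ℝ)+1)) (hcC : c ≤ 1/(4*C))
    {b₂ b : ℕ} (hb₂ : ∀ k ≥ b₂, am ξ k < ξ 0 / (32768 * C * (m:ℝ)^2))
    (hbs2 : b₂ ≤ b) (hbigz : 100*(M*(m+2)) ≤ b)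
    (ih : ∀ k, k < b → c * am ξ (M * (k+1)) ≤ ξ k) :
    c * am ξ (M * (b+1)) ≤ ξ b := by
  have hM0 : 0 < M := by omega
  obtain ⟨n, hndef⟩ : ∃ n, n = M * (b+1) := ⟨_, rfl⟩
  rw [← hndef]
  by_cases hD : (2*(b:ℝ)+2) * ξ 0 ≤ SP ξ (n+1)
  · exact caseD hpos hanti hns hM0 hcpos hcM hndef hD
  by_cases hSG : 128*(m:ℝ)*SP ξ (b+1) ≤ SP ξ (n+1)
  · exact caseSG hpos hanti hns hm hCpos hB hcpos hcC hndef hSG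
  push_neg at hSG
  by_cases hSP : 32*(m:ℝ)*(M:ℝ)*SP ξ (b+1) ≤ ((b:ℝ)+1)*ξ 0
  · exact caseSPARSE hpos hanti hns hm hCpos hC1 hB hM2 hMC hcpos hbigz ih hndef hSG.le hSP
  push_neg at hSP
  by_cases hMD : 32768*C*(m:ℝ)^2 * SP ξ (b+1) ≤ ((b:ℝ)+1)*ξ 0
  · exact caseMID hpos hanti hns hm hCpos hC1 hB hM2 hMC hcpos hbigz ih hndef hSG.le hSP hMD
  · exfalso
    push_neg at hMD
    have hξ0pos : 0 < ξ 0 := xi_pos hpos hanti hns 0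
    have hbpos : (0:ℝ) < (b:ℝ)+1 := by positivity
    have h1 : am ξ b < ξ 0/(32768*C*(m:ℝ)^2) := hb₂ b hbs2
    have h2 : ξ 0/(32768*C*(m:ℝ)^2) < am ξ b := by
      rw [am_eq, div_lt_div_iff₀ (by positivity) hbpos]
      nlinarith
    linarith

end Stmt8Aux


set_option maxHeartbeats 1000000 in
open Stmt8Aux in
theorem stmt_8 (ξ : ℕ → ℝ) (hξ : IsC0Star ξ) (hns : ¬ Summable ξ)
    (h : ∃ m : ℕ, 0 < m ∧ ∃ C : ℝ, 0 < C ∧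
      (∀ n, hatSeq ξ n ≤ C * ξ (n / m)) ∧ (∀ n, ξ n ≤ C * hatSeq ξ (n / m))) :
    ∃ m' : ℕ, 0 < m' ∧ ∃ C' : ℝ, 0 < C' ∧ ∀ n, am ξ n ≤ C' * ξ (n / m') := by
  classical
  obtain ⟨hpos, hanti, hlim⟩ := hξ
  obtain ⟨m, hm, C, hCpos, -, hB⟩ := h
  have hξpos : ∀ n, 0 < ξ n := xi_pos hpos hanti hns
  have hξ0pos : 0 < ξ 0 := hξpos 0
  have hm1 : (1:ℝ) ≤ (m:ℝ) := by exact_mod_cast hm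
  have hsple : ∀ k : ℕ, SP ξ k ≤ (k:ℝ) * ξ 0 := sp_le hanti
  have hspmono : Monotone (SP ξ) := sp_mono hpos
  have hsppos : ∀ k : ℕ, 0 < SP ξ (k+1) :=
    fun k => lt_of_lt_of_le hξ0pos (xi0_le_sp hpos k)
  have hampos : ∀ k : ℕ, 0 < am ξ k := by
    intro k
    rw [am_eq]
    exact div_pos (hsppos k) (by positivity)
  have hamle : ∀ k : ℕ, am ξ k ≤ ξ 0 := by
    intro k
    rw [am_eq, div_le_iff₀ (by positivity)]
    have h1 := hsple (k+1)
    push_cast at h1 ⊢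
    linarith
  have hC1 : (1:ℝ) ≤ C := by
    have h0 := hB 0
    have h1 : hatSeq ξ (0 / m) ≤ ξ 0 := hamle _
    have h2 : 0 < hatSeq ξ (0/m) := hampos _
    nlinarith
  -- the big ampliation constant
  set M : ℕ := 2000 * m * ⌈C⌉₊ with hMdef
  have hceilpos : 0 < ⌈C⌉₊ := Nat.ceil_pos.mpr hCpos
  have hM0 : 0 < M := by
    rw [hMdef]
    exact Nat.mul_pos (Nat.mul_pos (by norm_num) hm) hceilpos
  have hM2 : 2 ≤ M := by
    calc 2 ≤ 2000 := by norm_num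
    _ = 2000 * 1 * 1 := by norm_num
    _ ≤ 2000 * m * ⌈C⌉₊ := Nat.mul_le_mul (Nat.mul_le_mul_left 2000 hm) hceilpos
  have hMC : 2000 * C * (m:ℝ) ≤ (M:ℝ) := by
    have h1 : C ≤ (⌈C⌉₊ : ℝ) := Nat.le_ceil C
    have h2 : (M:ℝ) = 2000 * (m:ℝ) * (⌈C⌉₊ : ℝ) := by rw [hMdef]; push_cast; ring
    nlinarith
  have hMpos : (0:ℝ) < (M:ℝ) := by exact_mod_cast hM0
  -- Cesàro: am tends to 0
  have hΘpos : (0:ℝ) < ξ 0 / (32768 * C * (m:ℝ)^2) := by positivity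
  have hcesaro : Filter.Tendsto (am ξ) Filter.atTop (nhds 0) := by
    have h2 := hlim.cesaro.comp (Filter.tendsto_add_atTop_nat 1)
    have heq : ((fun n : ℕ => ((n:ℝ))⁻¹ * ∑ i ∈ Finset.range n, ξ i) ∘ (fun n => n + 1)) = am ξ := by
      funext b
      simp only [Function.comp_apply]
      rw [am_eq]
      push_cast
      rw [div_eq_inv_mul]
      rfl
    rwa [heq] at h2
  obtain ⟨b₂, hb₂⟩ := Filter.eventually_atTop.mp
    (hcesaro.eventually (gt_mem_nhds hΘpos))
  set b₀ := max b₂ (100 * (M * (m+2))) + 1 with hb₀def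
  have hb₂b₀ : b₂ < b₀ := by
    have := le_max_left b₂ (100 * (M * (m+2)))
    omega
  have hbig₀ : 100 * (M * (m+2)) < b₀ := by
    have := le_max_right b₂ (100 * (M * (m+2)))
    omega
  -- the constant c
  have hrange : (Finset.range b₀).Nonempty := Finset.nonempty_range_iff.mpr (by omega)
  set c₂ := (Finset.range b₀).inf' hrange (fun b => ξ b / am ξ (M*(b+1))) with hc₂def
  have hc₂pos : 0 < c₂ := by
    rw [hc₂def, Finset.lt_inf'_iff]
    exact fun b _ => div_pos (hξpos b) (hampos _)
  set c := min (min (1/((M:ℝ)+1)) (1/(4*C))) c₂ with hcdef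
  have hcpos : 0 < c := by
    rw [hcdef]
    apply lt_min (lt_min (by positivity) (by positivity)) hc₂pos
  have hcM : c ≤ 1/((M:ℝ)+1) := le_trans (min_le_left _ _) (min_le_left _ _)
  have hcC : c ≤ 1/(4*C) := le_trans (min_le_left _ _) (min_le_right _ _)
  have hcc₂ : c ≤ c₂ := min_le_right _ _
  -- THE MAIN CLAIM
  have claim : ∀ b, c * am ξ (M * (b+1)) ≤ ξ b := by
    intro b
    induction b using Nat.strong_induction_on with
    | _ b ih =>
    by_cases hbs : b < b₀
    · -- base range: by definition of c₂
      have hmem : b ∈ Finset.range b₀ := Finset.mem_range.mpr hbs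
      have h1 : c₂ ≤ ξ b / am ξ (M*(b+1)) := Finset.inf'_le _ hmem
      have h2 : 0 < am ξ (M*(b+1)) := hampos _
      have h3 : c * am ξ (M*(b+1)) ≤ (ξ b / am ξ (M*(b+1))) * am ξ (M*(b+1)) :=
        mul_le_mul (le_trans hcc₂ h1) le_rfl h2.le
          (le_trans (div_pos (hξpos b) h2).le (le_of_eq rfl))
      rwa [div_mul_cancel₀ _ h2.ne'] at h3
    · push_neg at hbs
      refine Stmt8Aux.mainstep hpos hanti hns hm hCpos hC1 hB hM2 hMC hcpos hcM hcC hb₂ ?_ ?_ ih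
      · omega
      · omega
  -- wrap up
  refine ⟨M, hM0, ((M:ℝ)+1)/c, by positivity, fun n => ?_⟩
  have hcl := claim (n / M)
  set K := M * (n / M + 1) with hKdef
  have hnK : n + 1 ≤ K + 1 := by
    have h1 := Nat.div_add_mod n M
    have h2 := Nat.mod_lt n hM0
    have h3 : K = M * (n/M) + M := by rw [hKdef]; ring
    omega
  have hKle : (K:ℝ) + 1 ≤ ((M:ℝ)+1) * ((n:ℝ)+1) := by
    have h1 : M * (n/M) ≤ n := Nat.mul_div_le n M
    have h3 : K ≤ n + M := by
      have : K = M * (n/M) + M := by rw [hKdef]; ring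
      omega
    have h4 : (K:ℝ) ≤ (n:ℝ) + (M:ℝ) := by exact_mod_cast h3
    nlinarith [Nat.cast_nonneg n (α := ℝ)]
  have h1 : am ξ n ≤ ((M:ℝ)+1) * am ξ K := by
    have h5 : SP ξ (n+1) ≤ SP ξ (K+1) := hspmono hnK
    have h6 : 0 < SP ξ (K+1) := hsppos K
    have h7 : (0:ℝ) < (K:ℝ)+1 := by positivity
    have h8 : (0:ℝ) < (n:ℝ)+1 := by positivity
    rw [am_eq, am_eq,
      show ((M:ℝ)+1) * (SP ξ (K+1) / ((K:ℝ)+1)) = (((M:ℝ)+1) * SP ξ (K+1)) / ((K:ℝ)+1) from by ring,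
      div_le_div_iff₀ h8 h7]
    nlinarith [mul_le_mul_of_nonneg_right h5 h7.le, mul_le_mul_of_nonneg_left hKle h6.le]
  calc am ξ n ≤ ((M:ℝ)+1) * am ξ K := h1
    _ = ((M:ℝ)+1)/c * (c * am ξ K) := by field_simp
    _ ≤ ((M:ℝ)+1)/c * ξ (n/M) := by
        apply mul_le_mul_of_nonneg_left hcl (by positivity)
end
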